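/- arXiv:0709.1296 — 7 statements merged into one kernel-verified Lean document; each statement's English description precedes it below -/
import Mathlib

section
/- Let K be a field and x₁,x₂,x₃ independent variables. Set s₁ = x₁+x₂+x₃, u = (x₁x₂² + x₂x₃² + x₃x₁² − 3x₁x₂x₃)/(x₁²+x₂²+x₃² − x₁x₂ − x₂x₃ − x₃x₁), and v = (x₁²x₂ + x₂²x₃ + x₃²x₁ − 3x₁x₂x₃)/(x₁²+x₂²+x₃² − x₁x₂ − x₂x₃ − x₃x₁). Then the second elementary symmetric function satisfies s₂ = s₁(u+v) − 3(u² − uv + v²). -/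
open MvPolynomial IntermediateField

abbrev F3 (K : Type) [Field K] : Type := FractionRing (MvPolynomial (Fin 3) K)

noncomputable abbrev x3 (K : Type) [Field K] (i : Fin 3) : F3 K :=
  algebraMap (MvPolynomial (Fin 3) K) (F3 K) (X i)

noncomputable abbrev masudaU (K : Type) [Field K] : F3 K :=
  (x3 K 0 * x3 K 1 ^ 2 + x3 K 1 * x3 K 2 ^ 2 + x3 K 2 * x3 K 0 ^ 2
    - 3 * (x3 K 0 * x3 K 1 * x3 K 2)) /
  (x3 K 0 ^ 2 + x3 K 1 ^ 2 + x3 K 2 ^ 2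
    - x3 K 0 * x3 K 1 - x3 K 1 * x3 K 2 - x3 K 2 * x3 K 0)

noncomputable abbrev masudaV (K : Type) [Field K] : F3 K :=
  (x3 K 0 ^ 2 * x3 K 1 + x3 K 1 ^ 2 * x3 K 2 + x3 K 2 ^ 2 * x3 K 0
    - 3 * (x3 K 0 * x3 K 1 * x3 K 2)) /
  (x3 K 0 ^ 2 + x3 K 1 ^ 2 + x3 K 2 ^ 2
    - x3 K 0 * x3 K 1 - x3 K 1 * x3 K 2 - x3 K 2 * x3 K 0)

lemma ring_id {F : Type*} [CommRing F] (y0 y1 y2 : F) :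
    (y0 * y1 + y1 * y2 + y2 * y0) *
      (y0 ^ 2 + y1 ^ 2 + y2 ^ 2 - y0 * y1 - y1 * y2 - y2 * y0) ^ 2 =
    (y0 + y1 + y2) *
        ((y0 * y1 ^ 2 + y1 * y2 ^ 2 + y2 * y0 ^ 2 - 3 * (y0 * y1 * y2)) +
          (y0 ^ 2 * y1 + y1 ^ 2 * y2 + y2 ^ 2 * y0 - 3 * (y0 * y1 * y2))) *
        (y0 ^ 2 + y1 ^ 2 + y2 ^ 2 - y0 * y1 - y1 * y2 - y2 * y0)
      - 3 * ((y0 * y1 ^ 2 + y1 * y2 ^ 2 + y2 * y0 ^ 2 - 3 * (y0 * y1 * y2)) ^ 2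
          - (y0 * y1 ^ 2 + y1 * y2 ^ 2 + y2 * y0 ^ 2 - 3 * (y0 * y1 * y2)) *
            (y0 ^ 2 * y1 + y1 ^ 2 * y2 + y2 ^ 2 * y0 - 3 * (y0 * y1 * y2))
          + (y0 ^ 2 * y1 + y1 ^ 2 * y2 + y2 ^ 2 * y0 - 3 * (y0 * y1 * y2)) ^ 2) := by
  ring

lemma aux_div {F : Type*} [Field F] (a b d s p : F) (hd : d ≠ 0)
    (h : p * d ^ 2 = s * (a + b) * d - 3 * (a ^ 2 - a * b + b ^ 2)) :
    p = s * (a / d + b / d) - 3 * ((a / d) ^ 2 - (a / d) * (b / d) + (b / d) ^ 2) := by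
  have hinv : d * d⁻¹ = 1 := mul_inv_cancel₀ hd
  simp only [div_eq_mul_inv]
  linear_combination d⁻¹ ^ 2 * h - (p * (1 + d * d⁻¹)) * hinv + s * (a + b) * d⁻¹ * hinv

/-- s₂ = s₁(u+v) − 3(u² − uv + v²). -/
theorem stmt_1 (K : Type) [Field K] :
    x3 K 0 * x3 K 1 + x3 K 1 * x3 K 2 + x3 K 2 * x3 K 0 =
      (x3 K 0 + x3 K 1 + x3 K 2) * (masudaU K + masudaV K)
        - 3 * (masudaU K ^ 2 - masudaU K * masudaV K + masudaV K ^ 2) := by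
  have hP : (X 0 ^ 2 + X 1 ^ 2 + X 2 ^ 2 - X 0 * X 1 - X 1 * X 2 - X 2 * X 0 :
      MvPolynomial (Fin 3) K) ≠ 0 := by
    intro h
    have := congrArg (eval ![1,0,0]) h
    simp at this
  have hd : x3 K 0 ^ 2 + x3 K 1 ^ 2 + x3 K 2 ^ 2
      - x3 K 0 * x3 K 1 - x3 K 1 * x3 K 2 - x3 K 2 * x3 K 0 ≠ 0 := by
    have : x3 K 0 ^ 2 + x3 K 1 ^ 2 + x3 K 2 ^ 2
        - x3 K 0 * x3 K 1 - x3 K 1 * x3 K 2 - x3 K 2 * x3 K 0 =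
        algebraMap (MvPolynomial (Fin 3) K) (F3 K)
          (X 0 ^ 2 + X 1 ^ 2 + X 2 ^ 2 - X 0 * X 1 - X 1 * X 2 - X 2 * X 0) := by
      simp only [map_add, map_sub, map_mul, map_pow, x3]
    rw [this]
    exact fun h => hP ((map_eq_zero_iff _
      (IsFractionRing.injective (MvPolynomial (Fin 3) K) (F3 K))).mp h)
  exact aux_div _ _ _ _ _ hd (ring_id (x3 K 0) (x3 K 1) (x3 K 2))
end

section
/- With s₁, u, v defined as above in K(x₁,x₂,x₃), the third elementary symmetric function satisfies s₃ = s₁·uv − (u³ + v³). -/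
open MvPolynomial IntermediateField

theorem hDne (K : Type) [Field K] :
    (x3 K 0 ^ 2 + x3 K 1 ^ 2 + x3 K 2 ^ 2
    - x3 K 0 * x3 K 1 - x3 K 1 * x3 K 2 - x3 K 2 * x3 K 0) ≠ 0 := by
  have h : (x3 K 0 ^ 2 + x3 K 1 ^ 2 + x3 K 2 ^ 2
      - x3 K 0 * x3 K 1 - x3 K 1 * x3 K 2 - x3 K 2 * x3 K 0)
      = algebraMap (MvPolynomial (Fin 3) K) (F3 K)
        (X 0 ^ 2 + X 1 ^ 2 + X 2 ^ 2 - X 0 * X 1 - X 1 * X 2 - X 2 * X 0) := by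
    simp [x3, map_add, map_sub, map_mul, map_pow]
  rw [h]
  intro hz
  have hinj := IsFractionRing.injective (MvPolynomial (Fin 3) K) (F3 K)
  have h0 : (X 0 ^ 2 + X 1 ^ 2 + X 2 ^ 2 - X 0 * X 1 - X 1 * X 2 - X 2 * X 0 :
      MvPolynomial (Fin 3) K) = 0 := by
    apply hinj; simpa using hz
  have := congrArg (eval (fun i => if i = 0 then (1:K) else 0)) h0
  simp at this

/-- s₃ = s₁·uv − (u³ + v³). -/
theorem stmt_2 (K : Type) [Field K] :
    x3 K 0 * x3 K 1 * x3 K 2 =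
      (x3 K 0 + x3 K 1 + x3 K 2) * (masudaU K * masudaV K)
        - (masudaU K ^ 3 + masudaV K ^ 3) := by
  have hD := hDne K
  rw [masudaU, masudaV]
  generalize hd : (x3 K 0 ^ 2 + x3 K 1 ^ 2 + x3 K 2 ^ 2
    - x3 K 0 * x3 K 1 - x3 K 1 * x3 K 2 - x3 K 2 * x3 K 0) = d at hD ⊢
  field_simp
  subst hd
  ring
end

section
/- Let K be a field and σ the K-automorphism of K(x₁,x₂,x₃) with σ(x₁)=x₂, σ(x₂)=x₃, σ(x₃)=x₁. Then the fixed field K(x₁,x₂,x₃)^⟨σ⟩ equals K(s₁, u, v), where s₁ = x₁+x₂+x₃ and u, v are defined by u = (x₁x₂²+x₂x₃²+x₃x₁²−3x₁x₂x₃)/D, v = (x₁²x₂+x₂²x₃+x₃²x₁−3x₁x₂x₃)/D with D = x₁²+x₂²+x₃²−x₁x₂−x₂x₃−x₃x₁. In particular, the fixed field of the cyclic group of order 3 permuting three variables is purely transcendental over K. -/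
open MvPolynomial IntermediateField Module

set_option synthInstance.maxHeartbeats 1000000

section MasudaGeneric

variable {E : Type*} [Field E]

/-- e₂ = s(u+v) - 3(u²-uv+v²). -/
lemma masuda_gen_e2 (a b c u v : E)
    (hD : (a^2 + b^2 + c^2 - a*b - b*c - c*a) ≠ 0)
    (h1 : u * (a^2 + b^2 + c^2 - a*b - b*c - c*a)
      = a*b^2 + b*c^2 + c*a^2 - 3*(a*b*c))
    (h2 : v * (a^2 + b^2 + c^2 - a*b - b*c - c*a)
      = a^2*b + b^2*c + c^2*a - 3*(a*b*c)) :
    (a+b+c) * (u+v) - 3*(u^2 - u*v + v^2) = a*b + b*c + c*a := by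
  apply mul_right_cancel₀ (pow_ne_zero 2 hD)
  linear_combination
    ((a+b+c)*(a^2 + b^2 + c^2 - a*b - b*c - c*a)
      - 3*(u*(a^2 + b^2 + c^2 - a*b - b*c - c*a) + (a*b^2 + b*c^2 + c*a^2 - 3*(a*b*c)))
      + 3*(v*(a^2 + b^2 + c^2 - a*b - b*c - c*a))) * h1
    + ((a+b+c)*(a^2 + b^2 + c^2 - a*b - b*c - c*a)
      + 3*(a*b^2 + b*c^2 + c*a^2 - 3*(a*b*c))
      - 3*(v*(a^2 + b^2 + c^2 - a*b - b*c - c*a) + (a^2*b + b^2*c + c^2*a - 3*(a*b*c)))) * h2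

/-- e₃ = s·uv - u³ - v³. -/
lemma masuda_gen_e3 (a b c u v : E)
    (hD : (a^2 + b^2 + c^2 - a*b - b*c - c*a) ≠ 0)
    (h1 : u * (a^2 + b^2 + c^2 - a*b - b*c - c*a)
      = a*b^2 + b*c^2 + c*a^2 - 3*(a*b*c))
    (h2 : v * (a^2 + b^2 + c^2 - a*b - b*c - c*a)
      = a^2*b + b^2*c + c^2*a - 3*(a*b*c)) :
    (a+b+c) * (u*v) - (u^3 + v^3) = a*b*c := by
  apply mul_right_cancel₀ (pow_ne_zero 3 hD)
  linear_combination
    ((a+b+c)*(v*(a^2 + b^2 + c^2 - a*b - b*c - c*a))*(a^2 + b^2 + c^2 - a*b - b*c - c*a)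
      - ((u*(a^2 + b^2 + c^2 - a*b - b*c - c*a))^2
        + (u*(a^2 + b^2 + c^2 - a*b - b*c - c*a))*(a*b^2 + b*c^2 + c*a^2 - 3*(a*b*c))
        + (a*b^2 + b*c^2 + c*a^2 - 3*(a*b*c))^2)) * h1
    + ((a+b+c)*(a*b^2 + b*c^2 + c*a^2 - 3*(a*b*c))*(a^2 + b^2 + c^2 - a*b - b*c - c*a)
      - ((v*(a^2 + b^2 + c^2 - a*b - b*c - c*a))^2
        + (v*(a^2 + b^2 + c^2 - a*b - b*c - c*a))*(a^2*b + b^2*c + c^2*a - 3*(a*b*c))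
        + (a^2*b + b^2*c + c^2*a - 3*(a*b*c))^2)) * h2

/-- x₂(v-u) = x₁² + (u-s)x₁ + sv - 2(u²-uv+v²). -/
lemma masuda_gen_x2 (a b c u v : E)
    (hD : (a^2 + b^2 + c^2 - a*b - b*c - c*a) ≠ 0)
    (h1 : u * (a^2 + b^2 + c^2 - a*b - b*c - c*a)
      = a*b^2 + b*c^2 + c*a^2 - 3*(a*b*c))
    (h2 : v * (a^2 + b^2 + c^2 - a*b - b*c - c*a)
      = a^2*b + b^2*c + c^2*a - 3*(a*b*c)) :
    b * (v - u) = a^2 + (u - (a+b+c))*a + (a+b+c)*v - 2*(u^2 - u*v + v^2) := by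
  apply mul_right_cancel₀ (pow_ne_zero 2 hD)
  linear_combination
    (-(b+a)*(a^2 + b^2 + c^2 - a*b - b*c - c*a)
      + 2*(u*(a^2 + b^2 + c^2 - a*b - b*c - c*a) + (a*b^2 + b*c^2 + c*a^2 - 3*(a*b*c)))
      - 2*(v*(a^2 + b^2 + c^2 - a*b - b*c - c*a))) * h1
    + ((b-(a+b+c))*(a^2 + b^2 + c^2 - a*b - b*c - c*a)
      - 2*(a*b^2 + b*c^2 + c*a^2 - 3*(a*b*c))
      + 2*(v*(a^2 + b^2 + c^2 - a*b - b*c - c*a) + (a^2*b + b^2*c + c^2*a - 3*(a*b*c)))) * h2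

end MasudaGeneric

section MasudaF3

variable (K : Type) [Field K]

lemma masuda_poly_ne_zero (p : MvPolynomial (Fin 3) K)
    (h : MvPolynomial.aeval (R := K) (S₁ := Polynomial K)
      ![Polynomial.X ^ 2, Polynomial.X, 0] p ≠ 0) : p ≠ 0 := by
  intro h0; rw [h0] at h; simp at h

lemma masuda_Dpoly_ne :
    (X 0^2 + X 1^2 + X 2^2 - X 0*X 1 - X 1*X 2 - X 2*X 0 : MvPolynomial (Fin 3) K) ≠ 0 := by
  apply masuda_poly_ne_zero
  simp only [map_add, map_sub, map_mul, map_pow, MvPolynomial.aeval_X,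
    Matrix.cons_val_zero, Matrix.cons_val_one, Matrix.head_cons, Matrix.cons_val_two,
    Matrix.tail_cons]
  intro h
  ring_nf at h
  have := congrArg (fun p => Polynomial.coeff p 4) h
  simp [Polynomial.coeff_X_pow] at this

lemma masuda_BApoly_ne :
    (X 0^2*X 1 + X 1^2*X 2 + X 2^2*X 0 - X 0*X 1^2 - X 1*X 2^2 - X 2*X 0^2 :
      MvPolynomial (Fin 3) K) ≠ 0 := by
  apply masuda_poly_ne_zero
  simp only [map_add, map_sub, map_mul, map_pow, MvPolynomial.aeval_X,
    Matrix.cons_val_zero, Matrix.cons_val_one, Matrix.head_cons, Matrix.cons_val_two,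
    Matrix.tail_cons]
  intro h
  ring_nf at h
  have := congrArg (fun p => Polynomial.coeff p 5) h
  simp [Polynomial.coeff_X_pow] at this

lemma masuda_algebraMap_ne_zero (p : MvPolynomial (Fin 3) K) (hp : p ≠ 0) :
    algebraMap (MvPolynomial (Fin 3) K) (F3 K) p ≠ 0 := by
  intro h0
  exact hp (IsFractionRing.injective (MvPolynomial (Fin 3) K) (F3 K) (by rw [h0, map_zero]))

lemma masuda_hD :
    ((x3 K 0 ^ 2 + x3 K 1 ^ 2 + x3 K 2 ^ 2 - x3 K 0 * x3 K 1 - x3 K 1 * x3 K 2 - x3 K 2 * x3 K 0) : F3 K) ≠ 0 := by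
  have h : ((x3 K 0 ^ 2 + x3 K 1 ^ 2 + x3 K 2 ^ 2 - x3 K 0 * x3 K 1 - x3 K 1 * x3 K 2 - x3 K 2 * x3 K 0) : F3 K)
      = algebraMap (MvPolynomial (Fin 3) K) (F3 K)
        (X 0^2 + X 1^2 + X 2^2 - X 0*X 1 - X 1*X 2 - X 2*X 0) := by
    simp only [map_add, map_sub, map_mul, map_pow]
  rw [h]
  exact masuda_algebraMap_ne_zero K _ (masuda_Dpoly_ne K)

lemma masuda_hBA :
    ((x3 K 0 ^ 2 * x3 K 1 + x3 K 1 ^ 2 * x3 K 2 + x3 K 2 ^ 2 * x3 K 0 - 3 * (x3 K 0 * x3 K 1 * x3 K 2)) - (x3 K 0 * x3 K 1 ^ 2 + x3 K 1 * x3 K 2 ^ 2 + x3 K 2 * x3 K 0 ^ 2 - 3 * (x3 K 0 * x3 K 1 * x3 K 2)) : F3 K) ≠ 0 := by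
  have h : ((x3 K 0 ^ 2 * x3 K 1 + x3 K 1 ^ 2 * x3 K 2 + x3 K 2 ^ 2 * x3 K 0 - 3 * (x3 K 0 * x3 K 1 * x3 K 2)) - (x3 K 0 * x3 K 1 ^ 2 + x3 K 1 * x3 K 2 ^ 2 + x3 K 2 * x3 K 0 ^ 2 - 3 * (x3 K 0 * x3 K 1 * x3 K 2)) : F3 K)
      = algebraMap (MvPolynomial (Fin 3) K) (F3 K)
        (X 0^2*X 1 + X 1^2*X 2 + X 2^2*X 0 - X 0*X 1^2 - X 1*X 2^2 - X 2*X 0^2) := by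
    simp only [map_add, map_sub, map_mul, map_pow]
    ring
  rw [h]
  exact masuda_algebraMap_ne_zero K _ (masuda_BApoly_ne K)

lemma masuda_adjoin_top (Lf : IntermediateField K (F3 K))
    (T : IntermediateField Lf (F3 K)) (hT : ∀ i, x3 K i ∈ T) : T = ⊤ := by
  rw [eq_top_iff]
  rintro z -
  obtain ⟨p, q, hq, rfl⟩ := IsFractionRing.div_surjective (A := MvPolynomial (Fin 3) K) z
  have hmem : ∀ r : MvPolynomial (Fin 3) K, algebraMap _ (F3 K) r ∈ T := by
    intro r
    induction r using MvPolynomial.induction_on with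
    | C k =>
        have h1 : (algebraMap (MvPolynomial (Fin 3) K) (F3 K)) (C k)
            = algebraMap K (F3 K) k := by
          rw [show (C k : MvPolynomial (Fin 3) K) = algebraMap K _ k from rfl,
            ← IsScalarTower.algebraMap_apply]
        rw [h1]
        have h2 : algebraMap K (F3 K) k ∈ Lf := Lf.algebraMap_mem k
        exact T.algebraMap_mem ⟨_, h2⟩
    | add p q hp hq => rw [RingHom.map_add]; exact add_mem hp hq
    | mul_X p i hp => rw [RingHom.map_mul]; exact mul_mem hp (hT i)
  exact div_mem (hmem p) (hmem q)

end MasudaF3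

set_option maxHeartbeats 2000000 in
/-- Masuda: the fixed field of the 3-cycle σ is K(s₁, u, v);
in particular it is purely transcendental over K. -/
theorem stmt_4 (K : Type) [Field K] (σ : F3 K ≃ₐ[K] F3 K)
    (hσ0 : σ (x3 K 0) = x3 K 1) (hσ1 : σ (x3 K 1) = x3 K 2)
    (hσ2 : σ (x3 K 2) = x3 K 0) :
    fixedField (Subgroup.zpowers σ) =
      adjoin K {x3 K 0 + x3 K 1 + x3 K 2, masudaU K, masudaV K} := by
  have hD := masuda_hD K
  have hBA := masuda_hBA K
  -- basic division facts for u and v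
  have h1 : masudaU K * ((x3 K 0 ^ 2 + x3 K 1 ^ 2 + x3 K 2 ^ 2 - x3 K 0 * x3 K 1 - x3 K 1 * x3 K 2 - x3 K 2 * x3 K 0)) = (x3 K 0 * x3 K 1 ^ 2 + x3 K 1 * x3 K 2 ^ 2 + x3 K 2 * x3 K 0 ^ 2 - 3 * (x3 K 0 * x3 K 1 * x3 K 2)) :=
    div_mul_cancel₀ _ hD
  have h2 : masudaV K * ((x3 K 0 ^ 2 + x3 K 1 ^ 2 + x3 K 2 ^ 2 - x3 K 0 * x3 K 1 - x3 K 1 * x3 K 2 - x3 K 2 * x3 K 0)) = (x3 K 0 ^ 2 * x3 K 1 + x3 K 1 ^ 2 * x3 K 2 + x3 K 2 ^ 2 * x3 K 0 - 3 * (x3 K 0 * x3 K 1 * x3 K 2)) :=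
    div_mul_cancel₀ _ hD
  -- v - u ≠ 0
  have hvu : masudaV K - masudaU K ≠ 0 := by
    have hsub : masudaV K - masudaU K
        = (((x3 K 0 ^ 2 * x3 K 1 + x3 K 1 ^ 2 * x3 K 2 + x3 K 2 ^ 2 * x3 K 0 - 3 * (x3 K 0 * x3 K 1 * x3 K 2))) - ((x3 K 0 * x3 K 1 ^ 2 + x3 K 1 * x3 K 2 ^ 2 + x3 K 2 * x3 K 0 ^ 2 - 3 * (x3 K 0 * x3 K 1 * x3 K 2)))) / ((x3 K 0 ^ 2 + x3 K 1 ^ 2 + x3 K 2 ^ 2 - x3 K 0 * x3 K 1 - x3 K 1 * x3 K 2 - x3 K 2 * x3 K 0)) := by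
      show _ - _ = _
      rw [div_sub_div_same]
    rw [hsub]
    exact div_ne_zero hBA hD
  -- the key identities
  have he2 := masuda_gen_e2 _ _ _ _ _ hD h1 h2
  have he3 := masuda_gen_e3 _ _ _ _ _ hD h1 h2
  have hx2id := masuda_gen_x2 _ _ _ _ _ hD h1 h2
  -- σ fixes s, u, v
  have hDfix : σ ((x3 K 0 ^ 2 + x3 K 1 ^ 2 + x3 K 2 ^ 2 - x3 K 0 * x3 K 1 - x3 K 1 * x3 K 2 - x3 K 2 * x3 K 0)) = (x3 K 0 ^ 2 + x3 K 1 ^ 2 + x3 K 2 ^ 2 - x3 K 0 * x3 K 1 - x3 K 1 * x3 K 2 - x3 K 2 * x3 K 0) := by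
    simp only [map_add, map_sub, map_mul, map_pow, hσ0, hσ1, hσ2]
    ring
  have hAnfix : σ ((x3 K 0 * x3 K 1 ^ 2 + x3 K 1 * x3 K 2 ^ 2 + x3 K 2 * x3 K 0 ^ 2 - 3 * (x3 K 0 * x3 K 1 * x3 K 2))) = (x3 K 0 * x3 K 1 ^ 2 + x3 K 1 * x3 K 2 ^ 2 + x3 K 2 * x3 K 0 ^ 2 - 3 * (x3 K 0 * x3 K 1 * x3 K 2)) := by
    simp only [map_add, map_sub, map_mul, map_pow, map_ofNat, hσ0, hσ1, hσ2]
    ring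
  have hBnfix : σ ((x3 K 0 ^ 2 * x3 K 1 + x3 K 1 ^ 2 * x3 K 2 + x3 K 2 ^ 2 * x3 K 0 - 3 * (x3 K 0 * x3 K 1 * x3 K 2))) = (x3 K 0 ^ 2 * x3 K 1 + x3 K 1 ^ 2 * x3 K 2 + x3 K 2 ^ 2 * x3 K 0 - 3 * (x3 K 0 * x3 K 1 * x3 K 2)) := by
    simp only [map_add, map_sub, map_mul, map_pow, map_ofNat, hσ0, hσ1, hσ2]
    ring
  have hsfix : σ (x3 K 0 + x3 K 1 + x3 K 2) = x3 K 0 + x3 K 1 + x3 K 2 := by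
    simp only [map_add, hσ0, hσ1, hσ2]
    ring
  have hufix : σ (masudaU K) = masudaU K := by
    have h1s := congrArg σ h1
    rw [map_mul, hDfix, hAnfix] at h1s
    exact mul_right_cancel₀ hD (h1s.trans h1.symm)
  have hvfix : σ (masudaV K) = masudaV K := by
    have h2s := congrArg σ h2
    rw [map_mul, hDfix, hBnfix] at h2s
    exact mul_right_cancel₀ hD (h2s.trans h2.symm)
  -- membership in the fixed field from being fixed by σ
  have hfix : ∀ x : F3 K, σ x = x → x ∈ fixedField (Subgroup.zpowers σ) := by
    intro x hx
    have hnat : ∀ m : ℕ, (σ ^ m) x = x := by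
      intro m
      induction m with
      | zero => simp
      | succ k ih => rw [pow_succ, AlgEquiv.mul_apply, hx, ih]
    intro g
    obtain ⟨g, hg⟩ := g
    obtain ⟨n, rfl⟩ := hg
    show (σ ^ n) x = x
    cases n with
    | ofNat m => rw [Int.ofNat_eq_coe, zpow_natCast]; exact hnat m
    | negSucc m =>
        rw [zpow_negSucc]
        have hinv : (σ ^ (m+1)) (((σ ^ (m+1))⁻¹) x) = x := by
          rw [← AlgEquiv.mul_apply, mul_inv_cancel]
          rfl
        exact (σ ^ (m+1)).injective (by rw [hinv, hnat (m+1)])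
  set Lf : IntermediateField K (F3 K) :=
    adjoin K {x3 K 0 + x3 K 1 + x3 K 2, masudaU K, masudaV K} with hLf
  -- L ≤ fixed field
  have hsL : (x3 K 0 + x3 K 1 + x3 K 2 : F3 K) ∈ Lf := subset_adjoin _ _ (by left; rfl)
  have huL : masudaU K ∈ Lf := subset_adjoin _ _ (by right; left; rfl)
  have hvL : masudaV K ∈ Lf := subset_adjoin _ _ (by right; right; rfl)
  have hLM : Lf ≤ fixedField (Subgroup.zpowers σ) := by
    rw [hLf, adjoin_le_iff]
    rintro x hx
    rcases hx with rfl | rfl | rfl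
    · exact hfix _ hsfix
    · exact hfix _ hufix
    · exact hfix _ hvfix
  -- e2, e3 ∈ L
  have h3L : ((3 : F3 K)) ∈ Lf := by
    have := IntermediateField.natCast_mem Lf 3
    simpa using this
  have h2L : ((2 : F3 K)) ∈ Lf := by
    have := IntermediateField.natCast_mem Lf 2
    simpa using this
  have he2L : (x3 K 0 * x3 K 1 + x3 K 1 * x3 K 2 + x3 K 2 * x3 K 0 : F3 K) ∈ Lf := by
    rw [← he2]
    exact sub_mem (mul_mem hsL (add_mem huL hvL))
      (mul_mem h3L (add_mem (sub_mem (pow_mem huL 2) (mul_mem huL hvL)) (pow_mem hvL 2)))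
  have he3L : (x3 K 0 * x3 K 1 * x3 K 2 : F3 K) ∈ Lf := by
    rw [← he3]
    exact sub_mem (mul_mem hsL (mul_mem huL hvL)) (add_mem (pow_mem huL 3) (pow_mem hvL 3))
  -- the cubic polynomial over L, with root x₀
  set q : Polynomial Lf :=
    -(Polynomial.C ⟨_, hsL⟩) * Polynomial.X ^ 2
      + Polynomial.C ⟨_, he2L⟩ * Polynomial.X - Polynomial.C ⟨_, he3L⟩ with hq
  set p : Polynomial Lf := Polynomial.X ^ 3 + q with hp
  have hqdeg : q.degree ≤ 2 := by
    rw [hq]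
    compute_degree
  have hqlt : q.degree < (Polynomial.X ^ 3 : Polynomial Lf).degree := by
    rw [Polynomial.degree_X_pow]
    exact lt_of_le_of_lt hqdeg (by decide)
  have hpmonic : p.Monic := by
    rw [hp]
    exact (Polynomial.monic_X_pow 3).add_of_left hqlt
  have hpeval : Polynomial.aeval (x3 K 0) p = 0 := by
    rw [hp, hq]
    simp only [map_add, map_sub, map_mul, map_pow, map_neg, Polynomial.aeval_X,
      Polynomial.aeval_C]
    show (x3 K 0) ^ 3 + (-(x3 K 0 + x3 K 1 + x3 K 2) * (x3 K 0) ^ 2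
      + (x3 K 0 * x3 K 1 + x3 K 1 * x3 K 2 + x3 K 2 * x3 K 0) * (x3 K 0) - x3 K 0 * x3 K 1 * x3 K 2) = 0
    ring
  have hint : IsIntegral Lf (x3 K 0) := ⟨p, hpmonic, hpeval⟩
  -- T = L(x₀) is everything
  set T : IntermediateField Lf (F3 K) := adjoin Lf {x3 K 0} with hT
  have hLfT : ∀ y : F3 K, y ∈ Lf → y ∈ T := by
    intro y hy
    exact T.algebraMap_mem ⟨y, hy⟩
  have hx0T : x3 K 0 ∈ T := subset_adjoin _ _ rfl
  have hx1T : x3 K 1 ∈ T := by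
    have hb : x3 K 1 = ((x3 K 0)^2 + (masudaU K - (x3 K 0 + x3 K 1 + x3 K 2)) * (x3 K 0)
        + (x3 K 0 + x3 K 1 + x3 K 2) * masudaV K
        - 2*((masudaU K)^2 - masudaU K * masudaV K + (masudaV K)^2))
        / (masudaV K - masudaU K) := by
      rw [eq_div_iff hvu]
      exact hx2id
    rw [hb]
    refine div_mem ?_ ?_
    · refine sub_mem (add_mem (add_mem (pow_mem hx0T 2) ?_) ?_) ?_
      · exact mul_mem (sub_mem (hLfT _ huL) (hLfT _ hsL)) hx0T
      · exact mul_mem (hLfT _ hsL) (hLfT _ hvL)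
      · refine mul_mem (hLfT _ h2L) ?_
        exact add_mem (sub_mem (pow_mem (hLfT _ huL) 2)
          (mul_mem (hLfT _ huL) (hLfT _ hvL))) (pow_mem (hLfT _ hvL) 2)
    · exact sub_mem (hLfT _ hvL) (hLfT _ huL)
  have hx2T : x3 K 2 ∈ T := by
    have hc : x3 K 2 = (x3 K 0 + x3 K 1 + x3 K 2) - x3 K 0 - x3 K 1 := by ring
    rw [hc]
    exact sub_mem (sub_mem (hLfT _ hsL) hx0T) hx1T
  have hTtop : T = ⊤ := by
    apply masuda_adjoin_top
    intro i
    fin_cases i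
    · exact hx0T
    · exact hx1T
    · exact hx2T
  -- finrank L E ≤ 3
  have hfd : FiniteDimensional Lf (F3 K) := by
    have fd : FiniteDimensional Lf T := adjoin.finiteDimensional hint
    rw [hTtop] at fd
    exact (topEquiv (F := Lf) (E := F3 K)).toLinearEquiv.finiteDimensional
  have hdeg3 : finrank Lf (F3 K) ≤ 3 := by
    have h1' : finrank Lf T = (minpoly Lf (x3 K 0)).natDegree := adjoin.finrank hint
    have hdegle : (minpoly Lf (x3 K 0)).natDegree ≤ 3 := by
      have hdle : (minpoly Lf (x3 K 0)).degree ≤ p.degree :=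
        minpoly.min _ _ hpmonic hpeval
      have hpdeg : p.degree = 3 := by
        rw [hp]
        rw [Polynomial.degree_add_eq_left_of_degree_lt hqlt, Polynomial.degree_X_pow]
        rfl
      rw [hpdeg] at hdle
      exact Polynomial.natDegree_le_iff_degree_le.mpr hdle
    have h2' : finrank Lf (⊤ : IntermediateField Lf (F3 K)) = finrank Lf (F3 K) :=
      (topEquiv (F := Lf) (E := F3 K)).toLinearEquiv.finrank_eq
    rw [hTtop] at h1'
    omega
  -- Artin : finrank of fixed field is 3
  have hσ3 : σ ^ 3 = 1 := by
    have key : ∀ i, σ (σ (σ (x3 K i))) = x3 K i := by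
      intro i; fin_cases i <;> simp [hσ0, hσ1, hσ2]
    ext z
    have h3 : (σ^3) z = σ (σ (σ z)) := by rw [pow_succ, pow_succ, pow_one]; rfl
    rw [h3]
    show (((σ : F3 K →+* F3 K).comp σ).comp (σ : F3 K →+* F3 K)) z = RingHom.id (F3 K) z
    apply RingHom.congr_fun
    apply IsLocalization.ringHom_ext (nonZeroDivisors (MvPolynomial (Fin 3) K))
    apply MvPolynomial.ringHom_ext
    · intro a
      have h : (algebraMap (MvPolynomial (Fin 3) K) (F3 K)) (C a) = algebraMap K (F3 K) a := by
        rw [show (C a : MvPolynomial (Fin 3) K) = algebraMap K _ a from rfl,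
          ← IsScalarTower.algebraMap_apply]
      simp only [RingHom.comp_apply, h, AlgEquiv.coe_ringEquiv]
      simp [AlgEquiv.commutes]
    · intro i
      simp only [RingHom.comp_apply]
      simpa using key i
  have hσne : σ ≠ 1 := by
    intro h
    have h01 : x3 K 0 = x3 K 1 := by rw [← hσ0, h]; rfl
    have := IsFractionRing.injective (MvPolynomial (Fin 3) K) (F3 K) h01
    exact (MvPolynomial.X_injective.ne (show (0 : Fin 3) ≠ 1 by decide)) this
  haveI : Fact (Nat.Prime 3) := ⟨by norm_num⟩
  have horder : orderOf σ = 3 := orderOf_eq_prime hσ3 hσne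
  haveI hfin : Finite (Subgroup.zpowers σ) := by
    have hfo : IsOfFinOrder σ := isOfFinOrder_iff_pow_eq_one.mpr ⟨3, by norm_num, hσ3⟩
    exact hfo.finite_zpowers
  haveI : Fintype (Subgroup.zpowers σ) := Fintype.ofFinite _
  have hcard : Fintype.card (Subgroup.zpowers σ) = 3 := by
    rw [← Nat.card_eq_fintype_card, Nat.card_zpowers, horder]
  have hM3 : finrank (fixedField (Subgroup.zpowers σ)) (F3 K) = 3 := by
    have h : finrank (fixedField (Subgroup.zpowers σ)) (F3 K)
        = Fintype.card (Subgroup.zpowers σ) :=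
      FixedPoints.finrank_eq_card (Subgroup.zpowers σ) (F3 K)
    rw [h, hcard]
  -- tower argument
  have hM3' : finrank (extendScalars hLM) (F3 K) = 3 := hM3
  have t : finrank Lf (extendScalars hLM) * finrank (extendScalars hLM) (F3 K)
      = finrank Lf (F3 K) := Module.finrank_mul_finrank _ _ _
  have pos : 0 < finrank Lf (extendScalars hLM) := finrank_pos
  rw [hM3'] at t
  have hone : finrank Lf (extendScalars hLM) = 1 := by omega
  have hbot : extendScalars hLM = ⊥ := IntermediateField.finrank_eq_one_iff.mp hone
  have := congrArg (IntermediateField.restrictScalars K) hbot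
  rw [IntermediateField.extendScalars_restrictScalars,
    IntermediateField.restrictScalars_bot_eq_self] at this
  exact this
end

section
/- Let K be a field, a ∈ K \ {0}, and let τ be the K-automorphism of K(x₁,x₂,x₃) given by τ(x₁) = a/x₂, τ(x₂) = a/x₁, τ(x₃) = a/x₃. Then with u, v as in Masuda's theorem, τ(u) = a·u/(u² − uv + v²) and τ(v) = a·v/(u² − uv + v²); in particular τ fixes the ratio w = u/v. -/
set_option maxHeartbeats 2000000

open MvPolynomial IntermediateField

private lemma aux1 (F : Type) [Field F] (A N M P : F) (hA : A ≠ 0) (hM : M ≠ 0)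
    (hP : P ≠ 0) : (A ^ 3 * N / P ^ 2) / (A ^ 2 * M / P ^ 2) = A * N / M := by
  field_simp

private lemma aux2 (F : Type) [Field F] (A N M D : F) (hD : D ≠ 0) (hM : M ≠ 0) :
    A * (N / D) / (D * M / D ^ 2) = A * N / M := by
  field_simp

private lemma aux3 (F : Type) [Field F] (A Nu Nv M D : F) (hA : A ≠ 0) (hM : M ≠ 0)
    (hD : D ≠ 0) (hNv : Nv ≠ 0) : A * Nu / M / (A * Nv / M) = Nu / D / (Nv / D) := by
  field_simp

/-- for τ: x₁↦a/x₂, x₂↦a/x₁, x₃↦a/x₃ one has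
τ(u) = au/(u²−uv+v²), τ(v) = av/(u²−uv+v²), and τ fixes w = u/v. -/
theorem stmt_5 (K : Type) [Field K] (a : K) (ha : a ≠ 0)
    (τ : F3 K ≃ₐ[K] F3 K)
    (hτ0 : τ (x3 K 0) = algebraMap K (F3 K) a / x3 K 1)
    (hτ1 : τ (x3 K 1) = algebraMap K (F3 K) a / x3 K 0)
    (hτ2 : τ (x3 K 2) = algebraMap K (F3 K) a / x3 K 2) :
    τ (masudaU K) = algebraMap K (F3 K) a * masudaU K
        / (masudaU K ^ 2 - masudaU K * masudaV K + masudaV K ^ 2) ∧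
    τ (masudaV K) = algebraMap K (F3 K) a * masudaV K
        / (masudaU K ^ 2 - masudaU K * masudaV K + masudaV K ^ 2) ∧
    τ (masudaU K / masudaV K) = masudaU K / masudaV K := by
  have key : ∀ q : MvPolynomial (Fin 3) K, q ≠ 0 →
      algebraMap (MvPolynomial (Fin 3) K) (F3 K) q ≠ 0 := by
    intro q hq
    simpa [IsFractionRing.to_map_eq_zero_iff] using hq
  have h0 : x3 K 0 ≠ 0 := key _ (X_ne_zero 0)
  have h1 : x3 K 1 ≠ 0 := key _ (X_ne_zero 1)
  have h2 : x3 K 2 ≠ 0 := key _ (X_ne_zero 2)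
  have hP : x3 K 0 * x3 K 1 * x3 K 2 ≠ 0 := mul_ne_zero (mul_ne_zero h0 h1) h2
  have hA : algebraMap K (F3 K) a ≠ 0 := (map_ne_zero _).mpr ha
  have hD : (x3 K 0 ^ 2 + x3 K 1 ^ 2 + x3 K 2 ^ 2 - x3 K 0 * x3 K 1 - x3 K 1 * x3 K 2 - x3 K 2 * x3 K 0) ≠ 0 := by
    have hp : (X 0 ^ 2 + X 1 ^ 2 + X 2 ^ 2 - X 0 * X 1 - X 1 * X 2 - X 2 * X 0 :
        MvPolynomial (Fin 3) K) ≠ 0 := by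
      intro h
      have h2 := congrArg (MvPolynomial.aeval (![1,0,0] : Fin 3 → K)) h
      simp at h2
    have hh := key _ hp
    simpa only [map_add, map_sub, map_mul, map_pow] using hh
  have hM : (x3 K 0 ^ 2 * x3 K 1 ^ 2 + x3 K 1 ^ 2 * x3 K 2 ^ 2 + x3 K 2 ^ 2 * x3 K 0 ^ 2 - x3 K 0 ^ 2 * x3 K 1 * x3 K 2 - x3 K 0 * x3 K 1 ^ 2 * x3 K 2 - x3 K 0 * x3 K 1 * x3 K 2 ^ 2) ≠ 0 := by
    have hp : ((X 0 ^ 2 * X 1 ^ 2 + X 1 ^ 2 * X 2 ^ 2 + X 2 ^ 2 * X 0 ^ 2 - X 0 ^ 2 * X 1 * X 2 - X 0 * X 1 ^ 2 * X 2 - X 0 * X 1 * X 2 ^ 2) : MvPolynomial (Fin 3) K) ≠ 0 := by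
      intro h
      have h2 := congrArg (MvPolynomial.aeval (![1,1,0] : Fin 3 → K)) h
      simp at h2
    have hh := key _ hp
    simpa only [map_add, map_sub, map_mul, map_pow] using hh
  have hNvne : (x3 K 0 ^ 2 * x3 K 1 + x3 K 1 ^ 2 * x3 K 2 + x3 K 2 ^ 2 * x3 K 0 - 3 * (x3 K 0 * x3 K 1 * x3 K 2)) ≠ 0 := by
    have hp : ((X 0 ^ 2 * X 1 + X 1 ^ 2 * X 2 + X 2 ^ 2 * X 0 - 3 * (X 0 * X 1 * X 2)) : MvPolynomial (Fin 3) K) ≠ 0 := by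
      intro h
      have h2 := congrArg (MvPolynomial.aeval (![1,1,0] : Fin 3 → K)) h
      simp at h2
    have hh := key _ hp
    simpa only [map_add, map_sub, map_mul, map_pow, map_ofNat] using hh
  have hτNu : τ (x3 K 0 * x3 K 1 ^ 2 + x3 K 1 * x3 K 2 ^ 2 + x3 K 2 * x3 K 0 ^ 2 - 3 * (x3 K 0 * x3 K 1 * x3 K 2)) = algebraMap K (F3 K) a ^ 3 * (x3 K 0 * x3 K 1 ^ 2 + x3 K 1 * x3 K 2 ^ 2 + x3 K 2 * x3 K 0 ^ 2 - 3 * (x3 K 0 * x3 K 1 * x3 K 2)) / (x3 K 0 * x3 K 1 * x3 K 2) ^ 2 := by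
    simp only [map_add, map_sub, map_mul, map_pow, map_ofNat, hτ0, hτ1, hτ2]
    field_simp
    ring
  have hτNv : τ (x3 K 0 ^ 2 * x3 K 1 + x3 K 1 ^ 2 * x3 K 2 + x3 K 2 ^ 2 * x3 K 0 - 3 * (x3 K 0 * x3 K 1 * x3 K 2)) = algebraMap K (F3 K) a ^ 3 * (x3 K 0 ^ 2 * x3 K 1 + x3 K 1 ^ 2 * x3 K 2 + x3 K 2 ^ 2 * x3 K 0 - 3 * (x3 K 0 * x3 K 1 * x3 K 2)) / (x3 K 0 * x3 K 1 * x3 K 2) ^ 2 := by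
    simp only [map_add, map_sub, map_mul, map_pow, map_ofNat, hτ0, hτ1, hτ2]
    field_simp
    ring
  have hτD : τ (x3 K 0 ^ 2 + x3 K 1 ^ 2 + x3 K 2 ^ 2 - x3 K 0 * x3 K 1 - x3 K 1 * x3 K 2 - x3 K 2 * x3 K 0) = algebraMap K (F3 K) a ^ 2 * (x3 K 0 ^ 2 * x3 K 1 ^ 2 + x3 K 1 ^ 2 * x3 K 2 ^ 2 + x3 K 2 ^ 2 * x3 K 0 ^ 2 - x3 K 0 ^ 2 * x3 K 1 * x3 K 2 - x3 K 0 * x3 K 1 ^ 2 * x3 K 2 - x3 K 0 * x3 K 1 * x3 K 2 ^ 2) / (x3 K 0 * x3 K 1 * x3 K 2) ^ 2 := by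
    simp only [map_add, map_sub, map_mul, map_pow, map_ofNat, hτ0, hτ1, hτ2]
    field_simp
    ring
  have hτU : τ (masudaU K) = algebraMap K (F3 K) a * (x3 K 0 * x3 K 1 ^ 2 + x3 K 1 * x3 K 2 ^ 2 + x3 K 2 * x3 K 0 ^ 2 - 3 * (x3 K 0 * x3 K 1 * x3 K 2)) / (x3 K 0 ^ 2 * x3 K 1 ^ 2 + x3 K 1 ^ 2 * x3 K 2 ^ 2 + x3 K 2 ^ 2 * x3 K 0 ^ 2 - x3 K 0 ^ 2 * x3 K 1 * x3 K 2 - x3 K 0 * x3 K 1 ^ 2 * x3 K 2 - x3 K 0 * x3 K 1 * x3 K 2 ^ 2) := by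
    show τ ((x3 K 0 * x3 K 1 ^ 2 + x3 K 1 * x3 K 2 ^ 2 + x3 K 2 * x3 K 0 ^ 2 - 3 * (x3 K 0 * x3 K 1 * x3 K 2)) / (x3 K 0 ^ 2 + x3 K 1 ^ 2 + x3 K 2 ^ 2 - x3 K 0 * x3 K 1 - x3 K 1 * x3 K 2 - x3 K 2 * x3 K 0)) = _
    rw [map_div₀, hτNu, hτD, aux1 _ _ _ _ _ hA hM hP]
  have hτV : τ (masudaV K) = algebraMap K (F3 K) a * (x3 K 0 ^ 2 * x3 K 1 + x3 K 1 ^ 2 * x3 K 2 + x3 K 2 ^ 2 * x3 K 0 - 3 * (x3 K 0 * x3 K 1 * x3 K 2)) / (x3 K 0 ^ 2 * x3 K 1 ^ 2 + x3 K 1 ^ 2 * x3 K 2 ^ 2 + x3 K 2 ^ 2 * x3 K 0 ^ 2 - x3 K 0 ^ 2 * x3 K 1 * x3 K 2 - x3 K 0 * x3 K 1 ^ 2 * x3 K 2 - x3 K 0 * x3 K 1 * x3 K 2 ^ 2) := by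
    show τ ((x3 K 0 ^ 2 * x3 K 1 + x3 K 1 ^ 2 * x3 K 2 + x3 K 2 ^ 2 * x3 K 0 - 3 * (x3 K 0 * x3 K 1 * x3 K 2)) / (x3 K 0 ^ 2 + x3 K 1 ^ 2 + x3 K 2 ^ 2 - x3 K 0 * x3 K 1 - x3 K 1 * x3 K 2 - x3 K 2 * x3 K 0)) = _
    rw [map_div₀, hτNv, hτD, aux1 _ _ _ _ _ hA hM hP]
  have hUV : masudaU K ^ 2 - masudaU K * masudaV K + masudaV K ^ 2 =
      (x3 K 0 ^ 2 + x3 K 1 ^ 2 + x3 K 2 ^ 2 - x3 K 0 * x3 K 1 - x3 K 1 * x3 K 2 - x3 K 2 * x3 K 0) * (x3 K 0 ^ 2 * x3 K 1 ^ 2 + x3 K 1 ^ 2 * x3 K 2 ^ 2 + x3 K 2 ^ 2 * x3 K 0 ^ 2 - x3 K 0 ^ 2 * x3 K 1 * x3 K 2 - x3 K 0 * x3 K 1 ^ 2 * x3 K 2 - x3 K 0 * x3 K 1 * x3 K 2 ^ 2) / (x3 K 0 ^ 2 + x3 K 1 ^ 2 + x3 K 2 ^ 2 - x3 K 0 * x3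 K 1 - x3 K 1 * x3 K 2 - x3 K 2 * x3 K 0) ^ 2 := by
    show ((x3 K 0 * x3 K 1 ^ 2 + x3 K 1 * x3 K 2 ^ 2 + x3 K 2 * x3 K 0 ^ 2 - 3 * (x3 K 0 * x3 K 1 * x3 K 2)) / (x3 K 0 ^ 2 + x3 K 1 ^ 2 + x3 K 2 ^ 2 - x3 K 0 * x3 K 1 - x3 K 1 * x3 K 2 - x3 K 2 * x3 K 0) : F3 K) ^ 2 - ((x3 K 0 * x3 K 1 ^ 2 + x3 K 1 * x3 K 2 ^ 2 + x3 K 2 * x3 K 0 ^ 2 - 3 * (x3 K 0 * x3 K 1 * x3 K 2)) / (x3 K 0 ^ 2 + x3 K 1 ^ 2 + x3 K 2 ^ 2 - x3 K 0 * x3 K 1 - x3 K 1 * x3 K 2 - x3 K 2 * x3 K 0)) * ((x3 K 0 ^ 2 * x3 K 1 + x3 K 1 ^ 2 * x3 K 2 + x3 K 2 ^ 2 * x3 K 0 - 3 * (x3 K 0 * x3 K 1 * x3 K 2)) / (x3 K 0 ^ 2 + x3 K 1 ^ 2 + x3 K 2 ^ 2 - x3 K 0 * x3 K 1 - x3 K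 1 * x3 K 2 - x3 K 2 * x3 K 0)) + ((x3 K 0 ^ 2 * x3 K 1 + x3 K 1 ^ 2 * x3 K 2 + x3 K 2 ^ 2 * x3 K 0 - 3 * (x3 K 0 * x3 K 1 * x3 K 2)) / (x3 K 0 ^ 2 + x3 K 1 ^ 2 + x3 K 2 ^ 2 - x3 K 0 * x3 K 1 - x3 K 1 * x3 K 2 - x3 K 2 * x3 K 0)) ^ 2 = _
    rw [div_pow, div_pow, div_mul_div_comm,
      show ((x3 K 0 ^ 2 + x3 K 1 ^ 2 + x3 K 2 ^ 2 - x3 K 0 * x3 K 1 - x3 K 1 * x3 K 2 - x3 K 2 * x3 K 0) * (x3 K 0 ^ 2 + x3 K 1 ^ 2 + x3 K 2 ^ 2 - x3 K 0 * x3 K 1 - x3 K 1 * x3 K 2 - x3 K 2 * x3 K 0) : F3 K) = (x3 K 0 ^ 2 + x3 K 1 ^ 2 + x3 K 2 ^ 2 - x3 K 0 * x3 K 1 - x3 K 1 * x3 K 2 - x3 K 2 * x3 K 0) ^ 2 from (sq (x3 K 0 ^ 2 + x3 K 1 ^ 2 + x3 K 2 ^ 2 - x3 K 0 * x3 K 1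 - x3 K 1 * x3 K 2 - x3 K 2 * x3 K 0)).symm,
      div_sub_div_same, ← add_div]
    congr 1
    ring
  refine ⟨?_, ?_, ?_⟩
  · rw [hτU, hUV]
    exact (aux2 _ _ _ _ _ hD hM).symm
  · rw [hτV, hUV]
    exact (aux2 _ _ _ _ _ hD hM).symm
  · rw [map_div₀, hτU, hτV]
    exact aux3 _ _ _ _ _ _ hA hM hD hNvne
end

section
/- Let K be a field, x₁,x₂,x₃,x₄ independent variables, s₁ = Σxᵢ, and S = (x₁+x₂−x₃−x₄)/(x₁x₂−x₃x₄), T = (x₁−x₂−x₃+x₄)/(x₁x₄−x₂x₃), U = (x₁−x₂+x₃−x₄)/(x₁x₃−x₂x₄). Then with u₁ = S+T+U, u₂ = ST+TU+SU, u₃ = STU, the element x₄ satisfies the degree-4 polynomial equation u₁² − 4u₂ + s₁u₃ + (8 − s₁u₁)u₃x₄ − (2u₁ − s₁u₂)u₃x₄² − s₁u₃²x₄³ + u₃²x₄⁴ = 0 over K(s₁, S, T, U). -/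
open MvPolynomial IntermediateField

abbrev F4 (K : Type) [Field K] : Type := FractionRing (MvPolynomial (Fin 4) K)

noncomputable abbrev x4 (K : Type) [Field K] (i : Fin 4) : F4 K :=
  algebraMap (MvPolynomial (Fin 4) K) (F4 K) (X i)

noncomputable abbrev sQ (K : Type) [Field K] : F4 K :=
  (x4 K 0 + x4 K 1 - x4 K 2 - x4 K 3) / (x4 K 0 * x4 K 1 - x4 K 2 * x4 K 3)

noncomputable abbrev tQ (K : Type) [Field K] : F4 K :=
  (x4 K 0 - x4 K 1 - x4 K 2 + x4 K 3) / (x4 K 0 * x4 K 3 - x4 K 1 * x4 K 2)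

noncomputable abbrev uQ (K : Type) [Field K] : F4 K :=
  (x4 K 0 - x4 K 1 + x4 K 2 - x4 K 3) / (x4 K 0 * x4 K 2 - x4 K 1 * x4 K 3)

noncomputable abbrev s1Q (K : Type) [Field K] : F4 K :=
  x4 K 0 + x4 K 1 + x4 K 2 + x4 K 3

noncomputable abbrev u1Q (K : Type) [Field K] : F4 K := sQ K + tQ K + uQ K
noncomputable abbrev u2Q (K : Type) [Field K] : F4 K :=
  sQ K * tQ K + tQ K * uQ K + sQ K * uQ K
noncomputable abbrev u3Q (K : Type) [Field K] : F4 K := sQ K * tQ K * uQ K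


lemma ne_aux (K : Type) [Field K] {p : MvPolynomial (Fin 4) K} (v : Fin 4 → K)
    (hp : eval v p ≠ 0) : algebraMap (MvPolynomial (Fin 4) K) (F4 K) p ≠ 0 := by
  have hp0 : p ≠ 0 := fun h => hp (by simp [h])
  simpa using (map_ne_zero_iff _ (IsFractionRing.injective (MvPolynomial (Fin 4) K) (F4 K))).mpr hp0

lemma hAne (K : Type) [Field K] : x4 K 0 * x4 K 1 - x4 K 2 * x4 K 3 ≠ 0 := by
  have := ne_aux K (p := X 0 * X 1 - X 2 * X 3) (![1,1,0,0]) (by simp)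
  simpa [map_sub, map_mul] using this

lemma hBne (K : Type) [Field K] : x4 K 0 * x4 K 3 - x4 K 1 * x4 K 2 ≠ 0 := by
  have := ne_aux K (p := X 0 * X 3 - X 1 * X 2) (![1,0,0,1]) (by simp)
  simpa [map_sub, map_mul] using this

lemma hCne (K : Type) [Field K] : x4 K 0 * x4 K 2 - x4 K 1 * x4 K 3 ≠ 0 := by
  have := ne_aux K (p := X 0 * X 2 - X 1 * X 3) (![1,0,1,0]) (by simp)
  simpa [map_sub, map_mul] using this

set_option maxHeartbeats 4000000 in
set_option maxRecDepth 100000 in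
lemma main_identity (F : Type) [Field F] (y0 y1 y2 y3 s t u : F)
    (hA : y0 * y1 - y2 * y3 ≠ 0) (hB : y0 * y3 - y1 * y2 ≠ 0)
    (hC : y0 * y2 - y1 * y3 ≠ 0)
    (hs : s * (y0 * y1 - y2 * y3) = y0 + y1 - y2 - y3)
    (ht : t * (y0 * y3 - y1 * y2) = y0 - y1 - y2 + y3)
    (hu : u * (y0 * y2 - y1 * y3) = y0 - y1 + y2 - y3) :
    (s + t + u) ^ 2 - 4 * (s * t + t * u + s * u) + (y0 + y1 + y2 + y3) * (s * t * u)
      + (8 - (y0 + y1 + y2 + y3) * (s + t + u)) * (s * t * u) * y3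
      - (2 * (s + t + u) - (y0 + y1 + y2 + y3) * (s * t + t * u + s * u)) * (s * t * u) * y3 ^ 2
      - (y0 + y1 + y2 + y3) * (s * t * u) ^ 2 * y3 ^ 3
      + (s * t * u) ^ 2 * y3 ^ 4 = 0 := by
  have hW2 : (((y0*y1 - y2*y3)*(y0*y3 - y1*y2)*(y0*y2 - y1*y3))) ^ 2 ≠ 0 :=
    pow_ne_zero 2 (mul_ne_zero (mul_ne_zero hA hB) hC)
  have h1 : (s + t + u) * ((y0*y1 - y2*y3)*(y0*y3 - y1*y2)*(y0*y2 - y1*y3)) = ((y0 + y1 - y2 - y3)*(y0*y3 - y1*y2)*(y0*y2 - y1*y3) + (y0 - y1 - y2 + y3)*(y0*y1 - y2*y3)*(y0*y2 - y1*y3) + (y0 - y1 + y2 - y3)*(y0*y1 - y2*y3)*(y0*y3 - y1*y2)) := by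
    linear_combination ((y0*y3 - y1*y2)*(y0*y2 - y1*y3)) * hs + ((y0*y1 - y2*y3)*(y0*y2 - y1*y3)) * ht + ((y0*y1 - y2*y3)*(y0*y3 - y1*y2)) * hu
  have h2 : (s*t + t*u + s*u) * ((y0*y1 - y2*y3)*(y0*y3 - y1*y2)*(y0*y2 - y1*y3)) = ((y0 + y1 - y2 - y3)*(y0 - y1 - y2 + y3)*(y0*y2 - y1*y3) + (y0 - y1 - y2 + y3)*(y0 - y1 + y2 - y3)*(y0*y1 - y2*y3) + (y0 + y1 - y2 - y3)*(y0 - y1 + y2 - y3)*(y0*y3 - y1*y2)) := by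
    linear_combination (t*(y0*y3 - y1*y2)*(y0*y2 - y1*y3) + u*(y0*y3 - y1*y2)*(y0*y2 - y1*y3)) * hs + ((y0 + y1 - y2 - y3)*(y0*y2 - y1*y3) + u*(y0*y1 - y2*y3)*(y0*y2 - y1*y3)) * ht
      + ((y0 + y1 - y2 - y3)*(y0*y3 - y1*y2) + (y0 - y1 - y2 + y3)*(y0*y1 - y2*y3)) * hu
  have h3 : (s*t*u) * ((y0*y1 - y2*y3)*(y0*y3 - y1*y2)*(y0*y2 - y1*y3)) = ((y0 + y1 - y2 - y3)*(y0 - y1 - y2 + y3)*(y0 - y1 + y2 - y3)) := by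
    linear_combination (t*u*(y0*y3 - y1*y2)*(y0*y2 - y1*y3)) * hs + ((y0 + y1 - y2 - y3)*u*(y0*y2 - y1*y3)) * ht + ((y0 + y1 - y2 - y3)*(y0 - y1 - y2 + y3)) * hu
  apply mul_left_cancel₀ hW2
  linear_combination ((s + t + u)*((y0*y1 - y2*y3)*(y0*y3 - y1*y2)*(y0*y2 - y1*y3)) + ((y0 + y1 - y2 - y3)*(y0*y3 - y1*y2)*(y0*y2 - y1*y3) + (y0 - y1 - y2 + y3)*(y0*y1 - y2*y3)*(y0*y2 - y1*y3) + (y0 - y1 + y2 - y3)*(y0*y1 - y2*y3)*(y0*y3 - y1*y2)) - (y0 + y1 + y2 + y3)*y3*((s*t*u)*((y0*y1 - y2*y3)*(y0*y3 - y1*y2)*(y0*y2 - y1*y3))) - 2*y3^2*((s*t*u)*((y0*y1 - y2*y3)*(y0*y3 - y1*y2)*(y0*y2 - y1*y3)))) * h1 + ((-4)*((y0*y1 - y2*y3)*(y0*y3 - y1*y2)*(y0*y2 - y1*y3)) + (y0 + y1 + y2 + y3)*y3^2*((s*t*u)*((y0*y1 - y2*y3)*(y0*y3 - y1*y2)*(y0*y2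 - y1*y3)))) * h2 + ((y0 + y1 + y2 + y3)*((y0*y1 - y2*y3)*(y0*y3 - y1*y2)*(y0*y2 - y1*y3)) + 8*((y0*y1 - y2*y3)*(y0*y3 - y1*y2)*(y0*y2 - y1*y3))*y3 - (y0 + y1 + y2 + y3)*y3*((y0 + y1 - y2 - y3)*(y0*y3 - y1*y2)*(y0*y2 - y1*y3) + (y0 - y1 - y2 + y3)*(y0*y1 - y2*y3)*(y0*y2 - y1*y3) + (y0 - y1 + y2 - y3)*(y0*y1 - y2*y3)*(y0*y3 - y1*y2)) - 2*y3^2*((y0 + y1 - y2 - y3)*(y0*y3 - y1*y2)*(y0*y2 - y1*y3) + (y0 - y1 - y2 + y3)*(y0*y1 - y2*y3)*(y0*y2 - y1*y3) + (y0 - y1 + y2 - y3)*(y0*y1 - y2*y3)*(y0*y3 - y1*y2)) + (y0 + y1 + y2 + y3)*y3^2*((y0 + y1 - y2 - y3)*(y0 - y1 - y2 + y3)*(y0*y2 - y1*y3) + (y0 - y1 - y2 + y3)*(y0 - y1 + y2 - y3)*(y0*y1 - y2*y3) + (y0 + y1 - y2 - y3)*(y0 - y1 + y2 - y3)*(y0*y3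 - y1*y2)) - (y0 + y1 + y2 + y3)*y3^3*((s*t*u)*((y0*y1 - y2*y3)*(y0*y3 - y1*y2)*(y0*y2 - y1*y3)) + ((y0 + y1 - y2 - y3)*(y0 - y1 - y2 + y3)*(y0 - y1 + y2 - y3))) + y3^4*((s*t*u)*((y0*y1 - y2*y3)*(y0*y3 - y1*y2)*(y0*y2 - y1*y3)) + ((y0 + y1 - y2 - y3)*(y0 - y1 - y2 + y3)*(y0 - y1 + y2 - y3)))) * h3

/-- x₄ satisfies the degree-4 equation
u₁² − 4u₂ + s₁u₃ + (8 − s₁u₁)u₃x₄ − (2u₁ − s₁u₂)u₃x₄² − s₁u₃²x₄³ + u₃²x₄⁴ = 0. -/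
theorem stmt_7 (K : Type) [Field K] :
    u1Q K ^ 2 - 4 * u2Q K + s1Q K * u3Q K
      + (8 - s1Q K * u1Q K) * u3Q K * x4 K 3
      - (2 * u1Q K - s1Q K * u2Q K) * u3Q K * x4 K 3 ^ 2
      - s1Q K * u3Q K ^ 2 * x4 K 3 ^ 3
      + u3Q K ^ 2 * x4 K 3 ^ 4 = 0 := by
  exact main_identity (F4 K) (x4 K 0) (x4 K 1) (x4 K 2) (x4 K 3) (sQ K) (tQ K) (uQ K)
    (hAne K) (hBne K) (hCne K)
    (div_mul_cancel₀ _ (hAne K)) (div_mul_cancel₀ _ (hBne K)) (div_mul_cancel₀ _ (hCne K))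
end

section
/- Let K be a field and V₄ = ⟨(12)(34), (13)(24)⟩ ⊂ S₄ act on K(x₁,x₂,x₃,x₄) by permuting the variables. Then K(x₁,x₂,x₃,x₄)^{V₄} = K(s₁, S, T, U), where s₁ = x₁+x₂+x₃+x₄, S = (x₁+x₂−x₃−x₄)/(x₁x₂−x₃x₄), T = (x₁−x₂−x₃+x₄)/(x₁x₄−x₂x₃), U = (x₁−x₂+x₃−x₄)/(x₁x₃−x₂x₄). In particular the fixed field of the Klein four-group acting by permutations on four variables is purely transcendental over K. -/
set_option maxHeartbeats 2000000
set_option synthInstance.maxHeartbeats 400000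
open Module


open MvPolynomial IntermediateField

section Aux

/-- A Klein four subgroup generated by two commuting involutions has cardinality 4. -/
lemma klein_card {G : Type*} [Group G] (g1 g2 : G) (h1 : g1 * g1 = 1) (h2 : g2 * g2 = 1)
    (hc : g1 * g2 = g2 * g1)
    (hne : g1 ≠ 1) (hne2 : g2 ≠ 1) (hne3 : g1 * g2 ≠ 1)
    (hg12ne1 : g1 * g2 ≠ g1) (hg12ne2 : g1 * g2 ≠ g2) :
    Nat.card (Subgroup.closure {g1, g2}) = 4 := by
  have hne12 : g1 ≠ g2 := by
    intro h; exact hne3 (by rw [h, h2])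
  have e1 : g1 * (g1 * g2) = g2 := by rw [← mul_assoc, h1, one_mul]
  have e2 : g2 * (g1 * g2) = g1 := by rw [hc, ← mul_assoc, h2, one_mul]
  have e3 : (g1 * g2) * g1 = g2 := by rw [mul_assoc, ← hc, ← mul_assoc, h1, one_mul]
  have e4 : (g1 * g2) * g2 = g1 := by rw [mul_assoc, h2, mul_one]
  have e5 : (g1 * g2) * (g1 * g2) = 1 := by rw [mul_assoc, e2, h1]
  have mem1 : (1 : G) ∈ ({1, g1, g2, g1 * g2} : Set G) := Or.inl rfl
  have memg1 : g1 ∈ ({1, g1, g2, g1 * g2} : Set G) := Or.inr (Or.inl rfl)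
  have memg2 : g2 ∈ ({1, g1, g2, g1 * g2} : Set G) := Or.inr (Or.inr (Or.inl rfl))
  have memg12 : g1 * g2 ∈ ({1, g1, g2, g1 * g2} : Set G) := Or.inr (Or.inr (Or.inr rfl))
  let V : Subgroup G :=
    { carrier := {1, g1, g2, g1 * g2}
      one_mem' := mem1
      mul_mem' := by
        rintro a b (rfl | rfl | rfl | rfl) (rfl | rfl | rfl | rfl) <;>
          (try simp only [one_mul, mul_one, h1, h2, e1, e2, e3, e4, e5]) <;>
          first
            | exact mem1 | exact memg1 | exact memg2 | exact memg12
            | (rw [← hc]; exact memg12)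
      inv_mem' := by
        rintro a (rfl | rfl | rfl | rfl)
        · rw [inv_one]; exact mem1
        · rw [inv_eq_of_mul_eq_one_right h1]; exact memg1
        · rw [inv_eq_of_mul_eq_one_right h2]; exact memg2
        · rw [inv_eq_of_mul_eq_one_right e5]; exact memg12 }
  have hSet : (Subgroup.closure {g1, g2} : Set G) = {1, g1, g2, g1 * g2} := by
    apply subset_antisymm
    · have : Subgroup.closure {g1, g2} ≤ V := by
        rw [Subgroup.closure_le]
        rintro a (rfl | rfl)
        · exact memg1
        · exact memg2
      exact this
    · intro x hx
      rcases hx with rfl | rfl | rfl | rfl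
      · exact Subgroup.one_mem _
      · exact Subgroup.subset_closure (Or.inl rfl)
      · exact Subgroup.subset_closure (Or.inr rfl)
      · exact Subgroup.mul_mem _ (Subgroup.subset_closure (Or.inl rfl))
          (Subgroup.subset_closure (Or.inr rfl))
  have hcard : Nat.card (Subgroup.closure {g1, g2}) = Nat.card ({1, g1, g2, g1 * g2} : Set G) := by
    rw [← hSet]; rfl
  rw [hcard, Nat.card_coe_set_eq,
    Set.ncard_insert_of_notMem (by simp [hne.symm, hne2.symm, hne3.symm]) (by
      apply Set.Finite.insert; apply Set.Finite.insert; exact Set.finite_singleton _),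
    Set.ncard_insert_of_notMem (by simp [hne12, hg12ne1.symm]) (by
      apply Set.Finite.insert; exact Set.finite_singleton _),
    Set.ncard_insert_of_notMem (by simp [hg12ne2.symm]),
    Set.ncard_singleton]

variable (K : Type) [Field K]

lemma alg_ne_zero (p : MvPolynomial (Fin 4) K) (v : Fin 4 → K)
    (h : MvPolynomial.eval v p = 1) : algebraMap (MvPolynomial (Fin 4) K) (F4 K) p ≠ 0 := by
  have hp : p ≠ 0 := by rintro rfl; simp at h
  simpa using (IsFractionRing.to_map_eq_zero_iff (K := F4 K)).not.mpr hp

lemma x4_inj : Function.Injective (x4 K) := by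
  intro i j h
  exact MvPolynomial.X_injective (IsFractionRing.injective (MvPolynomial (Fin 4) K) (F4 K) h)

lemma ha4 : (x4 K 0 + x4 K 1 - x4 K 2 - x4 K 3) ≠ 0 := by
  have := alg_ne_zero K (X 0 + X 1 - X 2 - X 3) ![1,0,0,0] (by simp)
  simpa using this

lemma hb4 : (x4 K 0 - x4 K 1 + x4 K 2 - x4 K 3) ≠ 0 := by
  have := alg_ne_zero K (X 0 - X 1 + X 2 - X 3) ![1,0,0,0] (by simp)
  simpa using this

lemma hc4 : (x4 K 0 - x4 K 1 - x4 K 2 + x4 K 3) ≠ 0 := by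
  have := alg_ne_zero K (X 0 - X 1 - X 2 + X 3) ![1,0,0,0] (by simp)
  simpa using this

lemma he4 : s1Q K ≠ 0 := by
  have := alg_ne_zero K (X 0 + X 1 + X 2 + X 3) ![1,0,0,0] (by simp)
  simpa using this

lemma hy4 : (x4 K 0 + x4 K 1) ≠ 0 := by
  have := alg_ne_zero K (X 0 + X 1) ![1,0,0,0] (by simp)
  simpa using this

lemma hdS4 : (x4 K 0 * x4 K 1 - x4 K 2 * x4 K 3) ≠ 0 := by
  have := alg_ne_zero K (X 0 * X 1 - X 2 * X 3) ![1,1,0,0] (by simp)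
  rwa [RingHom.map_sub, RingHom.map_mul, RingHom.map_mul] at this

lemma hdT4 : (x4 K 0 * x4 K 3 - x4 K 1 * x4 K 2) ≠ 0 := by
  have := alg_ne_zero K (X 0 * X 3 - X 1 * X 2) ![1,0,0,1] (by simp)
  rwa [RingHom.map_sub, RingHom.map_mul, RingHom.map_mul] at this

lemma hdU4 : (x4 K 0 * x4 K 2 - x4 K 1 * x4 K 3) ≠ 0 := by
  have := alg_ne_zero K (X 0 * X 2 - X 1 * X 3) ![1,0,1,0] (by simp)
  rwa [RingHom.map_sub, RingHom.map_mul, RingHom.map_mul] at this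

lemma hsQ : sQ K ≠ 0 := div_ne_zero (ha4 K) (hdS4 K)
lemma htQ : tQ K ≠ 0 := div_ne_zero (hc4 K) (hdT4 K)
lemma huQ : uQ K ≠ 0 := div_ne_zero (hb4 K) (hdU4 K)

/-- Any intermediate field (over any base between K and F4 K) containing all the
variables is everything. -/
lemma eq_top_of_vars (L : IntermediateField K (F4 K)) (E : IntermediateField L (F4 K))
    (hx : ∀ i, x4 K i ∈ E) : E = ⊤ := by
  have hK : ∀ k : K, algebraMap K (F4 K) k ∈ E := by
    intro k
    have h : algebraMap K (F4 K) k = algebraMap L (F4 K) ⟨algebraMap K (F4 K) k,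
        L.algebraMap_mem k⟩ := rfl
    rw [h]
    exact E.algebraMap_mem _
  have hp : ∀ p : MvPolynomial (Fin 4) K, algebraMap (MvPolynomial (Fin 4) K) (F4 K) p ∈ E := by
    intro p
    induction p using MvPolynomial.induction_on with
    | C a => rw [← MvPolynomial.algebraMap_eq, ← IsScalarTower.algebraMap_apply]; exact hK a
    | add p q hp hq => rw [RingHom.map_add]; exact E.add_mem hp hq
    | mul_X p i hp => rw [RingHom.map_mul]; exact E.mul_mem hp (hx i)
  rw [eq_top_iff]
  rintro z -
  obtain ⟨p, q, -, rfl⟩ := IsFractionRing.div_surjective (A := MvPolynomial (Fin 4) K) z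
  exact E.div_mem (hp p) (hp q)

lemma quad_monic {R : Type*} [CommRing R] [Nontrivial R] (u v : R) :
    (Polynomial.X ^ 2 + Polynomial.C u * Polynomial.X + Polynomial.C v).Monic := by
  have h : (Polynomial.C u * Polynomial.X + Polynomial.C v).degree
      < (Polynomial.X ^ 2 : Polynomial R).degree := by
    refine lt_of_le_of_lt Polynomial.degree_linear_le ?_
    rw [Polynomial.degree_X_pow]
    decide
  have := (Polynomial.monic_X_pow (R := R) 2).add_of_left h
  rwa [← add_assoc] at this

lemma quad_natDegree {R : Type*} [CommRing R] [Nontrivial R] (u v : R) :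
    (Polynomial.X ^ 2 + Polynomial.C u * Polynomial.X + Polynomial.C v).natDegree = 2 := by
  have h : (Polynomial.C u * Polynomial.X + Polynomial.C v).degree
      < (Polynomial.X ^ 2 : Polynomial R).degree := by
    refine lt_of_le_of_lt Polynomial.degree_linear_le ?_
    rw [Polynomial.degree_X_pow]
    decide
  have hdeg : (Polynomial.X ^ 2 + (Polynomial.C u * Polynomial.X + Polynomial.C v)).degree = 2 := by
    rw [Polynomial.degree_add_eq_left_of_degree_lt h, Polynomial.degree_X_pow]
    rfl
  rw [← add_assoc] at hdeg
  exact Polynomial.natDegree_eq_of_degree_eq_some hdeg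

/-- Tower bound: if `adjoin L {z2, z1} = ⊤` with z1 quadratic over L and z2 quadratic
over `L⟮z1⟯`, then `[F4 : L] ≤ 4`. -/
lemma finrank_le_four (L : IntermediateField K (F4 K)) (z1 z2 : F4 K)
    (q1 : Polynomial L) (hq1m : q1.Monic) (hq1d : q1.natDegree = 2)
    (hq1z : Polynomial.aeval z1 q1 = 0)
    (q2 : Polynomial (adjoin L {z1})) (hq2m : q2.Monic) (hq2d : q2.natDegree = 2)
    (hq2z : Polynomial.aeval z2 q2 = 0)
    (htop : adjoin L {z2, z1} = ⊤) :
    FiniteDimensional L (F4 K) ∧ finrank L (F4 K) ≤ 4 := by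
  have hint1 : IsIntegral L z1 := ⟨q1, hq1m, hq1z⟩
  have hint2 : IsIntegral (adjoin L {z1}) z2 := ⟨q2, hq2m, hq2z⟩
  have htop2 : adjoin (adjoin L {z1} : IntermediateField L (F4 K)) {z2} = ⊤ := by
    apply restrictScalars_injective L
    rw [restrictScalars_top, adjoin_adjoin_left]
    simpa using htop
  have hfd1 : FiniteDimensional L (adjoin L {z1}) := adjoin.finiteDimensional hint1
  have hfd2 : FiniteDimensional (adjoin L {z1})
      (adjoin (adjoin L {z1} : IntermediateField L (F4 K)) {z2}) :=
    adjoin.finiteDimensional hint2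
  have hfd2' : FiniteDimensional (adjoin L {z1}) (F4 K) := by
    rw [htop2] at hfd2
    exact (topEquiv (F := (adjoin L {z1} : IntermediateField L (F4 K)))
      (E := F4 K)).toLinearEquiv.finiteDimensional
  have hfd : FiniteDimensional L (F4 K) := FiniteDimensional.trans L (adjoin L {z1}) (F4 K)
  refine ⟨hfd, ?_⟩
  have h1 : finrank L (adjoin L {z1}) ≤ 2 := by
    rw [adjoin.finrank hint1]
    have := Polynomial.natDegree_le_of_dvd (minpoly.dvd L z1 hq1z) hq1m.ne_zero
    omega
  have h2 : finrank (adjoin L {z1}) (F4 K) ≤ 2 := by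
    have hb : finrank (adjoin L {z1})
        (adjoin (adjoin L {z1} : IntermediateField L (F4 K)) {z2}) ≤ 2 := by
      rw [adjoin.finrank hint2]
      have := Polynomial.natDegree_le_of_dvd (minpoly.dvd (adjoin L {z1}) z2 hq2z) hq2m.ne_zero
      omega
    rwa [htop2, finrank_top'] at hb
  calc finrank L (F4 K) = finrank L (adjoin L {z1}) * finrank (adjoin L {z1}) (F4 K) :=
        (finrank_mul_finrank _ _ _).symm
    _ ≤ 2 * 2 := Nat.mul_le_mul h1 h2
    _ ≤ 4 := by norm_num

end Aux

-- to be inserted before the theorem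
section HardBound
variable (K : Type) [Field K]

lemma aeval_quad (L : IntermediateField K (F4 K)) (u v : L) (z : F4 K) :
    Polynomial.aeval z (Polynomial.X^2 + Polynomial.C u * Polynomial.X + Polynomial.C v) =
      z^2 + (u : F4 K)*z + (v : F4 K) := by
  simp [IntermediateField.algebraMap_apply]

lemma aeval_quad2 (L : IntermediateField K (F4 K)) (M : IntermediateField L (F4 K))
    (u v : M) (z : F4 K) :
    Polynomial.aeval z (Polynomial.X^2 + Polynomial.C u * Polynomial.X + Polynomial.C v) =
      z^2 + (u : F4 K)*z + (v : F4 K) := by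
  simp [IntermediateField.algebraMap_apply]

lemma hard_bound :
    FiniteDimensional (adjoin K {s1Q K, sQ K, tQ K, uQ K}) (F4 K) ∧
      finrank (adjoin K {s1Q K, sQ K, tQ K, uQ K}) (F4 K) ≤ 4 := by
  set L := adjoin K {s1Q K, sQ K, tQ K, uQ K} with hLdef
  have hs1L : s1Q K ∈ L := subset_adjoin K _ (Or.inl rfl)
  have hsL : sQ K ∈ L := subset_adjoin K _ (Or.inr (Or.inl rfl))
  have htL : tQ K ∈ L := subset_adjoin K _ (Or.inr (Or.inr (Or.inl rfl)))
  have huL : uQ K ∈ L := subset_adjoin K _ (Or.inr (Or.inr (Or.inr rfl)))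
  have h4L : (4 : F4 K) ∈ L := by
    have := L.algebraMap_mem (4 : K)
    rwa [map_ofNat] at this
  have ha := ha4 K
  have hb := hb4 K
  have hc := hc4 K
  have hdS := hdS4 K
  have hdT := hdT4 K
  have hdU := hdU4 K
  have hs := hsQ K
  have ht := htQ K
  have hu := huQ K
  have he := he4 K
  rcases eq_or_ne (2 : F4 K) 0 with h2 | h2
  · -- characteristic 2
    -- d_S, d_T, d_U all lie in L
    have hdSL : x4 K 0 * x4 K 1 - x4 K 2 * x4 K 3 ∈ L := by
      have heq : x4 K 0 * x4 K 1 - x4 K 2 * x4 K 3 = s1Q K / sQ K := by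
        rw [eq_div_iff hs, show sQ K = (x4 K 0 + x4 K 1 - x4 K 2 - x4 K 3) /
          (x4 K 0 * x4 K 1 - x4 K 2 * x4 K 3) from rfl, mul_div_assoc']
        rw [mul_comm, mul_div_assoc, div_self hdS, mul_one]
        linear_combination (-(x4 K 2 + x4 K 3)) * h2
      rw [heq]; exact L.div_mem hs1L hsL
    have hdTL : x4 K 0 * x4 K 3 - x4 K 1 * x4 K 2 ∈ L := by
      have heq : x4 K 0 * x4 K 3 - x4 K 1 * x4 K 2 = s1Q K / tQ K := by
        rw [eq_div_iff ht, show tQ K = (x4 K 0 - x4 K 1 - x4 K 2 + x4 K 3) /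
          (x4 K 0 * x4 K 3 - x4 K 1 * x4 K 2) from rfl, mul_div_assoc']
        rw [mul_comm, mul_div_assoc, div_self hdT, mul_one]
        linear_combination (-(x4 K 1 + x4 K 2)) * h2
      rw [heq]; exact L.div_mem hs1L htL
    have hdUL : x4 K 0 * x4 K 2 - x4 K 1 * x4 K 3 ∈ L := by
      have heq : x4 K 0 * x4 K 2 - x4 K 1 * x4 K 3 = s1Q K / uQ K := by
        rw [eq_div_iff hu, show uQ K = (x4 K 0 - x4 K 1 + x4 K 2 - x4 K 3) /
          (x4 K 0 * x4 K 2 - x4 K 1 * x4 K 3) from rfl, mul_div_assoc']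
        rw [mul_comm, mul_div_assoc, div_self hdU, mul_one]
        linear_combination (-(x4 K 1 + x4 K 3)) * h2
      rw [heq]; exact L.div_mem hs1L huL
    -- first quadratic: y = x0 + x1 over L
    set q1 : Polynomial L := Polynomial.X^2 + Polynomial.C (-⟨s1Q K, hs1L⟩) * Polynomial.X +
      Polynomial.C ⟨(x4 K 0 * x4 K 3 - x4 K 1 * x4 K 2) + (x4 K 0 * x4 K 2 - x4 K 1 * x4 K 3),
        L.add_mem hdTL hdUL⟩ with hq1def
    have hq1z : Polynomial.aeval (x4 K 0 + x4 K 1) q1 = 0 := by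
      rw [hq1def, aeval_quad]
      show (x4 K 0 + x4 K 1)^2 + (-(s1Q K))*(x4 K 0 + x4 K 1) +
        ((x4 K 0 * x4 K 3 - x4 K 1 * x4 K 2) + (x4 K 0 * x4 K 2 - x4 K 1 * x4 K 3)) = 0
      linear_combination (-(x4 K 1 * x4 K 2 + x4 K 1 * x4 K 3)) * h2
    -- second quadratic: x0 over L(y)
    set M : IntermediateField L (F4 K) := adjoin L {x4 K 0 + x4 K 1} with hMdef
    have hyM : x4 K 0 + x4 K 1 ∈ M := subset_adjoin _ _ rfl
    have hLM : ∀ z : F4 K, z ∈ L → z ∈ M := fun z hz => M.algebraMap_mem ⟨z, hz⟩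
    have hw0M : ((x4 K 0 * x4 K 1 - x4 K 2 * x4 K 3) / s1Q K) * (x4 K 0 + x4 K 1) +
        ((x4 K 0 * x4 K 3 - x4 K 1 * x4 K 2) * (x4 K 0 * x4 K 2 - x4 K 1 * x4 K 3) -
          (x4 K 0 * x4 K 1 - x4 K 2 * x4 K 3) *
            ((x4 K 0 * x4 K 3 - x4 K 1 * x4 K 2) + (x4 K 0 * x4 K 2 - x4 K 1 * x4 K 3))) /
          (s1Q K)^2 ∈ M :=
      add_mem (mul_mem (hLM _ (L.div_mem hdSL hs1L)) hyM)
        (hLM _ (L.div_mem (L.sub_mem (L.mul_mem hdTL hdUL)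
          (L.mul_mem hdSL (L.add_mem hdTL hdUL))) (pow_mem hs1L 2)))
    set q2 : Polynomial M := Polynomial.X^2 +
      Polynomial.C (-⟨x4 K 0 + x4 K 1, hyM⟩) * Polynomial.X + Polynomial.C ⟨_, hw0M⟩ with hq2def
    have hq2z : Polynomial.aeval (x4 K 0) q2 = 0 := by
      rw [hq2def, aeval_quad2]
      show (x4 K 0)^2 + (-(x4 K 0 + x4 K 1))*(x4 K 0) +
        (((x4 K 0 * x4 K 1 - x4 K 2 * x4 K 3) / s1Q K) * (x4 K 0 + x4 K 1) +
          ((x4 K 0 * x4 K 3 - x4 K 1 * x4 K 2) * (x4 K 0 * x4 K 2 - x4 K 1 * x4 K 3) -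
            (x4 K 0 * x4 K 1 - x4 K 2 * x4 K 3) *
              ((x4 K 0 * x4 K 3 - x4 K 1 * x4 K 2) + (x4 K 0 * x4 K 2 - x4 K 1 * x4 K 3))) /
            (s1Q K)^2) = 0
      have hkey : (x4 K 0)^2*(s1Q K)^2 - (x4 K 0 + x4 K 1)*(x4 K 0)*(s1Q K)^2 +
          (x4 K 0 * x4 K 1 - x4 K 2 * x4 K 3)*(s1Q K)*(x4 K 0 + x4 K 1) +
          ((x4 K 0 * x4 K 3 - x4 K 1 * x4 K 2) * (x4 K 0 * x4 K 2 - x4 K 1 * x4 K 3) -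
            (x4 K 0 * x4 K 1 - x4 K 2 * x4 K 3) *
              ((x4 K 0 * x4 K 3 - x4 K 1 * x4 K 2) + (x4 K 0 * x4 K 2 - x4 K 1 * x4 K 3))) = 0 := by
        linear_combination (-(x4 K 1 * (x4 K 0 + x4 K 2) * (x4 K 0 + x4 K 3) *
          (x4 K 2 + x4 K 3))) * h2
      have hdiv : (x4 K 0)^2 + (-(x4 K 0 + x4 K 1))*(x4 K 0) +
          (((x4 K 0 * x4 K 1 - x4 K 2 * x4 K 3) / s1Q K) * (x4 K 0 + x4 K 1) +
            ((x4 K 0 * x4 K 3 - x4 K 1 * x4 K 2) * (x4 K 0 * x4 K 2 - x4 K 1 * x4 K 3) -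
              (x4 K 0 * x4 K 1 - x4 K 2 * x4 K 3) *
                ((x4 K 0 * x4 K 3 - x4 K 1 * x4 K 2) + (x4 K 0 * x4 K 2 - x4 K 1 * x4 K 3))) /
              (s1Q K)^2)
          = ((x4 K 0)^2*(s1Q K)^2 - (x4 K 0 + x4 K 1)*(x4 K 0)*(s1Q K)^2 +
            (x4 K 0 * x4 K 1 - x4 K 2 * x4 K 3)*(s1Q K)*(x4 K 0 + x4 K 1) +
            ((x4 K 0 * x4 K 3 - x4 K 1 * x4 K 2) * (x4 K 0 * x4 K 2 - x4 K 1 * x4 K 3) -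
              (x4 K 0 * x4 K 1 - x4 K 2 * x4 K 3) *
                ((x4 K 0 * x4 K 3 - x4 K 1 * x4 K 2) + (x4 K 0 * x4 K 2 - x4 K 1 * x4 K 3)))) /
            (s1Q K)^2 := by
        field_simp
        ring
      rw [hdiv, hkey, zero_div]
    -- all variables lie in adjoin L {x0, y}
    set E : IntermediateField L (F4 K) := adjoin L {x4 K 0, x4 K 0 + x4 K 1} with hEdef
    have hx0E : x4 K 0 ∈ E := subset_adjoin _ _ (Or.inl rfl)
    have hyE : x4 K 0 + x4 K 1 ∈ E := subset_adjoin _ _ (Or.inr rfl)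
    have hLE : ∀ z : F4 K, z ∈ L → z ∈ E := fun z hz => E.algebraMap_mem ⟨z, hz⟩
    have hx1E : x4 K 1 ∈ E := by
      have h : x4 K 1 = (x4 K 0 + x4 K 1) - x4 K 0 := by ring
      rw [h]; exact E.sub_mem hyE hx0E
    have hyne : (x4 K 0 + x4 K 1) ≠ 0 := hy4 K
    have hx2E : x4 K 2 ∈ E := by
      have h : x4 K 2 = (x4 K 0 * (x4 K 0 * x4 K 2 - x4 K 1 * x4 K 3) -
          x4 K 1 * (x4 K 0 * x4 K 3 - x4 K 1 * x4 K 2)) / (x4 K 0 + x4 K 1)^2 := by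
        rw [eq_div_iff (pow_ne_zero 2 hyne)]
        linear_combination (x4 K 0 * x4 K 1 * x4 K 2 + x4 K 0 * x4 K 1 * x4 K 3) * h2
      rw [h]
      exact E.div_mem (E.sub_mem (E.mul_mem hx0E (hLE _ hdUL)) (E.mul_mem hx1E (hLE _ hdTL)))
        (pow_mem hyE 2)
    have hx3E : x4 K 3 ∈ E := by
      have h : x4 K 3 = (x4 K 0 * (x4 K 0 * x4 K 3 - x4 K 1 * x4 K 2) -
          x4 K 1 * (x4 K 0 * x4 K 2 - x4 K 1 * x4 K 3)) / (x4 K 0 + x4 K 1)^2 := by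
        rw [eq_div_iff (pow_ne_zero 2 hyne)]
        linear_combination (x4 K 0 * x4 K 1 * x4 K 2 + x4 K 0 * x4 K 1 * x4 K 3) * h2
      rw [h]
      exact E.div_mem (E.sub_mem (E.mul_mem hx0E (hLE _ hdTL)) (E.mul_mem hx1E (hLE _ hdUL)))
        (pow_mem hyE 2)
    have htop : adjoin L {x4 K 0, x4 K 0 + x4 K 1} = ⊤ := by
      apply eq_top_of_vars K L
      intro i
      fin_cases i
      · exact hx0E
      · exact hx1E
      · exact hx2E
      · exact hx3E
    exact finrank_le_four K L (x4 K 0 + x4 K 1) (x4 K 0) q1 (quad_monic _ _)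
      (quad_natDegree _ _) hq1z q2 (quad_monic _ _) (quad_natDegree _ _) hq2z htop
  · -- characteristic ≠ 2
    have h4 : (4 : F4 K) ≠ 0 := by
      rw [show (4 : F4 K) = 2 * 2 from by norm_num]
      exact mul_ne_zero h2 h2
    have hαL : s1Q K - 4 / sQ K ∈ L := L.sub_mem hs1L (L.div_mem h4L hsL)
    have hβL : s1Q K - 4 / uQ K ∈ L := L.sub_mem hs1L (L.div_mem h4L huL)
    have hγL : s1Q K - 4 / tQ K ∈ L := L.sub_mem hs1L (L.div_mem h4L htL)
    -- first quadratic: a = x0 + x1 - x2 - x3 over L, a² = βγ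
    set q1 : Polynomial L := Polynomial.X^2 + Polynomial.C 0 * Polynomial.X +
      Polynomial.C (-(⟨_, hβL⟩ * ⟨_, hγL⟩)) with hq1def
    have hI1 : (x4 K 0 + x4 K 1 - x4 K 2 - x4 K 3)^2
        = (s1Q K - 4 / uQ K) * (s1Q K - 4 / tQ K) := by
      field_simp
      ring
    have hq1z : Polynomial.aeval (x4 K 0 + x4 K 1 - x4 K 2 - x4 K 3) q1 = 0 := by
      rw [hq1def, aeval_quad]
      show (x4 K 0 + x4 K 1 - x4 K 2 - x4 K 3)^2 + 0 * (x4 K 0 + x4 K 1 - x4 K 2 - x4 K 3) +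
        (-((s1Q K - 4 / uQ K) * (s1Q K - 4 / tQ K))) = 0
      rw [hI1]; ring
    -- second quadratic: b over L(a), b² = αγ
    set M : IntermediateField L (F4 K) :=
      adjoin L {x4 K 0 + x4 K 1 - x4 K 2 - x4 K 3} with hMdef
    have hLM : ∀ z : F4 K, z ∈ L → z ∈ M := fun z hz => M.algebraMap_mem ⟨z, hz⟩
    have hαγM : (s1Q K - 4 / sQ K) * (s1Q K - 4 / tQ K) ∈ M :=
      hLM _ (L.mul_mem hαL hγL)
    set q2 : Polynomial M := Polynomial.X^2 + Polynomial.C 0 * Polynomial.X +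
      Polynomial.C (-⟨_, hαγM⟩) with hq2def
    have hI2 : (x4 K 0 - x4 K 1 + x4 K 2 - x4 K 3)^2
        = (s1Q K - 4 / sQ K) * (s1Q K - 4 / tQ K) := by
      field_simp
      ring
    have hq2z : Polynomial.aeval (x4 K 0 - x4 K 1 + x4 K 2 - x4 K 3) q2 = 0 := by
      rw [hq2def, aeval_quad2]
      show (x4 K 0 - x4 K 1 + x4 K 2 - x4 K 3)^2 + 0 * (x4 K 0 - x4 K 1 + x4 K 2 - x4 K 3) +
        (-((s1Q K - 4 / sQ K) * (s1Q K - 4 / tQ K))) = 0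
      rw [hI2]; ring
    -- all variables lie in adjoin L {b, a}
    set E : IntermediateField L (F4 K) := adjoin L {x4 K 0 - x4 K 1 + x4 K 2 - x4 K 3,
      x4 K 0 + x4 K 1 - x4 K 2 - x4 K 3} with hEdef
    have hbE : x4 K 0 - x4 K 1 + x4 K 2 - x4 K 3 ∈ E := subset_adjoin _ _ (Or.inl rfl)
    have haE : x4 K 0 + x4 K 1 - x4 K 2 - x4 K 3 ∈ E := subset_adjoin _ _ (Or.inr rfl)
    have hLE : ∀ z : F4 K, z ∈ L → z ∈ E := fun z hz => E.algebraMap_mem ⟨z, hz⟩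
    have hcE : x4 K 0 - x4 K 1 - x4 K 2 + x4 K 3 ∈ E := by
      have h : x4 K 0 - x4 K 1 - x4 K 2 + x4 K 3 =
          (s1Q K - 4 / sQ K) * ((s1Q K - 4 / uQ K) * (s1Q K - 4 / tQ K)) /
            ((x4 K 0 + x4 K 1 - x4 K 2 - x4 K 3) * (x4 K 0 - x4 K 1 + x4 K 2 - x4 K 3)) := by
        rw [eq_div_iff (mul_ne_zero ha hb)]
        field_simp
        ring
      rw [h]
      exact E.div_mem (hLE _ (L.mul_mem hαL (L.mul_mem hβL hγL))) (E.mul_mem haE hbE)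
    have h4E : (4 : F4 K) ∈ E := hLE _ h4L
    have hs1E : s1Q K ∈ E := hLE _ hs1L
    have hx0E : x4 K 0 ∈ E := by
      have h : x4 K 0 = (s1Q K + (x4 K 0 + x4 K 1 - x4 K 2 - x4 K 3) +
          (x4 K 0 - x4 K 1 + x4 K 2 - x4 K 3) + (x4 K 0 - x4 K 1 - x4 K 2 + x4 K 3)) / 4 := by
        rw [eq_div_iff h4]; ring
      rw [h]
      exact E.div_mem (E.add_mem (E.add_mem (E.add_mem hs1E haE) hbE) hcE) h4E
    have hx1E : x4 K 1 ∈ E := by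
      have h : x4 K 1 = (s1Q K + (x4 K 0 + x4 K 1 - x4 K 2 - x4 K 3) -
          (x4 K 0 - x4 K 1 + x4 K 2 - x4 K 3) - (x4 K 0 - x4 K 1 - x4 K 2 + x4 K 3)) / 4 := by
        rw [eq_div_iff h4]; ring
      rw [h]
      exact E.div_mem (E.sub_mem (E.sub_mem (E.add_mem hs1E haE) hbE) hcE) h4E
    have hx2E : x4 K 2 ∈ E := by
      have h : x4 K 2 = (s1Q K - (x4 K 0 + x4 K 1 - x4 K 2 - x4 K 3) +
          (x4 K 0 - x4 K 1 + x4 K 2 - x4 K 3) - (x4 K 0 - x4 K 1 - x4 K 2 + x4 K 3)) / 4 := by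
        rw [eq_div_iff h4]; ring
      rw [h]
      exact E.div_mem (E.sub_mem (E.add_mem (E.sub_mem hs1E haE) hbE) hcE) h4E
    have hx3E : x4 K 3 ∈ E := by
      have h : x4 K 3 = (s1Q K - (x4 K 0 + x4 K 1 - x4 K 2 - x4 K 3) -
          (x4 K 0 - x4 K 1 + x4 K 2 - x4 K 3) + (x4 K 0 - x4 K 1 - x4 K 2 + x4 K 3)) / 4 := by
        rw [eq_div_iff h4]; ring
      rw [h]
      exact E.div_mem (E.add_mem (E.sub_mem (E.sub_mem hs1E haE) hbE) hcE) h4E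
    have htop : adjoin L {x4 K 0 - x4 K 1 + x4 K 2 - x4 K 3,
        x4 K 0 + x4 K 1 - x4 K 2 - x4 K 3} = ⊤ := by
      apply eq_top_of_vars K L
      intro i
      fin_cases i
      · exact hx0E
      · exact hx1E
      · exact hx2E
      · exact hx3E
    exact finrank_le_four K L (x4 K 0 + x4 K 1 - x4 K 2 - x4 K 3)
      (x4 K 0 - x4 K 1 + x4 K 2 - x4 K 3) q1 (quad_monic _ _) (quad_natDegree _ _) hq1z
      q2 (quad_monic _ _) (quad_natDegree _ _) hq2z htop

end HardBound

/-- the fixed field of the Klein four-group V₄ = ⟨(12)(34),(13)(24)⟩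
acting by permuting the variables is K(s₁, S, T, U); in particular it is purely
transcendental over K. -/
theorem stmt_8 (K : Type) [Field K]
    (φ : Equiv.Perm (Fin 4) →* (F4 K ≃ₐ[K] F4 K))
    (hφ : ∀ σ : Equiv.Perm (Fin 4), ∀ i, φ σ (x4 K i) = x4 K (σ i)) :
    fixedField (Subgroup.closure
        {φ (Equiv.swap 0 1 * Equiv.swap 2 3), φ (Equiv.swap 0 2 * Equiv.swap 1 3)}) =
      adjoin K {s1Q K, sQ K, tQ K, uQ K} := by

  set g1 := φ (Equiv.swap 0 1 * Equiv.swap 2 3) with hg1def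
  set g2 := φ (Equiv.swap 0 2 * Equiv.swap 1 3) with hg2def
  set H := Subgroup.closure {g1, g2} with hHdef
  set L := adjoin K {s1Q K, sQ K, tQ K, uQ K} with hLdef
  -- action of the generators on the variables
  have e10 : g1 (x4 K 0) = x4 K 1 := by
    rw [hg1def, hφ]
    norm_num [show (Equiv.swap 0 1 * Equiv.swap 2 3 : Equiv.Perm (Fin 4)) 0 = 1 from by decide]
  have e11 : g1 (x4 K 1) = x4 K 0 := by
    rw [hg1def, hφ]
    norm_num [show (Equiv.swap 0 1 * Equiv.swap 2 3 : Equiv.Perm (Fin 4)) 1 = 0 from by decide]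
  have e12 : g1 (x4 K 2) = x4 K 3 := by
    rw [hg1def, hφ]
    norm_num [show (Equiv.swap 0 1 * Equiv.swap 2 3 : Equiv.Perm (Fin 4)) 2 = 3 from by decide]
  have e13 : g1 (x4 K 3) = x4 K 2 := by
    rw [hg1def, hφ]
    norm_num [show (Equiv.swap 0 1 * Equiv.swap 2 3 : Equiv.Perm (Fin 4)) 3 = 2 from by decide]
  have e20 : g2 (x4 K 0) = x4 K 2 := by
    rw [hg2def, hφ]
    norm_num [show (Equiv.swap 0 2 * Equiv.swap 1 3 : Equiv.Perm (Fin 4)) 0 = 2 from by decide]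
  have e21 : g2 (x4 K 1) = x4 K 3 := by
    rw [hg2def, hφ]
    norm_num [show (Equiv.swap 0 2 * Equiv.swap 1 3 : Equiv.Perm (Fin 4)) 1 = 3 from by decide]
  have e22 : g2 (x4 K 2) = x4 K 0 := by
    rw [hg2def, hφ]
    norm_num [show (Equiv.swap 0 2 * Equiv.swap 1 3 : Equiv.Perm (Fin 4)) 2 = 0 from by decide]
  have e23 : g2 (x4 K 3) = x4 K 1 := by
    rw [hg2def, hφ]
    norm_num [show (Equiv.swap 0 2 * Equiv.swap 1 3 : Equiv.Perm (Fin 4)) 3 = 1 from by decide]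
  have hxne : ∀ i j : Fin 4, i ≠ j → x4 K i ≠ x4 K j := by
    intro i j hij h
    exact hij (x4_inj K h)
  -- cardinality of H
  have hcard : Nat.card H = 4 := by
    rw [hHdef]
    apply klein_card
    · rw [hg1def, ← map_mul,
        show (Equiv.swap 0 1 * Equiv.swap 2 3 : Equiv.Perm (Fin 4)) *
          (Equiv.swap 0 1 * Equiv.swap 2 3) = 1 from by decide, map_one]
    · rw [hg2def, ← map_mul,
        show (Equiv.swap 0 2 * Equiv.swap 1 3 : Equiv.Perm (Fin 4)) *
          (Equiv.swap 0 2 * Equiv.swap 1 3) = 1 from by decide, map_one]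
    · rw [hg1def, hg2def, ← map_mul, ← map_mul,
        show (Equiv.swap 0 1 * Equiv.swap 2 3 : Equiv.Perm (Fin 4)) *
          (Equiv.swap 0 2 * Equiv.swap 1 3) = (Equiv.swap 0 2 * Equiv.swap 1 3) *
          (Equiv.swap 0 1 * Equiv.swap 2 3) from by decide]
    · intro h
      have h0 : g1 (x4 K 0) = x4 K 0 := by rw [h]; rfl
      rw [e10] at h0
      exact hxne 1 0 (by decide) h0
    · intro h
      have h0 : g2 (x4 K 0) = x4 K 0 := by rw [h]; rfl
      rw [e20] at h0
      exact hxne 2 0 (by decide) h0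
    · intro h
      have h0 : (g1 * g2) (x4 K 0) = x4 K 0 := by rw [h]; rfl
      rw [AlgEquiv.mul_apply, e20, e12] at h0
      exact hxne 3 0 (by decide) h0
    · intro h
      have h0 : (g1 * g2) (x4 K 0) = g1 (x4 K 0) := by rw [h]
      rw [AlgEquiv.mul_apply, e20, e12, e10] at h0
      exact hxne 3 1 (by decide) h0
    · intro h
      have h0 : (g1 * g2) (x4 K 0) = g2 (x4 K 0) := by rw [h]
      rw [AlgEquiv.mul_apply, e20, e12] at h0
      exact hxne 3 2 (by decide) h0
  -- Artin: [F4 : F4^H] = 4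
  have hfr : finrank (fixedField H) (F4 K) = 4 := by
    have hfin : Finite H := Nat.finite_of_card_ne_zero (by omega)
    have hfin2 : Fintype H := Fintype.ofFinite H
    have hff : FaithfulSMul H (F4 K) := by
      constructor
      intro g g' h
      ext x
      exact h x
    have key : finrank (fixedField H) (F4 K) = Fintype.card H :=
      FixedPoints.finrank_eq_card H (F4 K)
    rw [key, ← Nat.card_eq_fintype_card, hcard]
  -- easy direction: L ≤ fixedField H
  have hfix : ∀ z : F4 K, g1 z = z → g2 z = z → ∀ g ∈ H, g z = z := by
    intro z h1z h2z g hg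
    rw [hHdef] at hg
    induction hg using Subgroup.closure_induction with
    | mem g hg => rcases hg with rfl | rfl; exacts [h1z, h2z]
    | one => rfl
    | mul a b ha hb iha ihb => rw [AlgEquiv.mul_apply, ihb, iha]
    | inv a ha ih => rw [show a⁻¹ z = a.symm z from rfl, AlgEquiv.symm_apply_eq, ih]
  have f1s1 : g1 (s1Q K) = s1Q K := by
    rw [show s1Q K = x4 K 0 + x4 K 1 + x4 K 2 + x4 K 3 from rfl,
      map_add, map_add, map_add, e10, e11, e12, e13]
    ring
  have f2s1 : g2 (s1Q K) = s1Q K := by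
    rw [show s1Q K = x4 K 0 + x4 K 1 + x4 K 2 + x4 K 3 from rfl,
      map_add, map_add, map_add, e20, e21, e22, e23]
    ring
  have f1s : g1 (sQ K) = sQ K := by
    rw [show sQ K = (x4 K 0 + x4 K 1 - x4 K 2 - x4 K 3) / (x4 K 0 * x4 K 1 - x4 K 2 * x4 K 3)
        from rfl,
      map_div₀, map_sub, map_sub, map_add, map_sub, map_mul, map_mul, e10, e11, e12, e13]
    rw [show x4 K 1 + x4 K 0 - x4 K 3 - x4 K 2 = x4 K 0 + x4 K 1 - x4 K 2 - x4 K 3 from by ring,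
      show x4 K 1 * x4 K 0 - x4 K 3 * x4 K 2 = x4 K 0 * x4 K 1 - x4 K 2 * x4 K 3 from by ring]
  have f2s : g2 (sQ K) = sQ K := by
    rw [show sQ K = (x4 K 0 + x4 K 1 - x4 K 2 - x4 K 3) / (x4 K 0 * x4 K 1 - x4 K 2 * x4 K 3)
        from rfl,
      map_div₀, map_sub, map_sub, map_add, map_sub, map_mul, map_mul, e20, e21, e22, e23]
    rw [show x4 K 2 + x4 K 3 - x4 K 0 - x4 K 1
        = -(x4 K 0 + x4 K 1 - x4 K 2 - x4 K 3) from by ring,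
      show x4 K 2 * x4 K 3 - x4 K 0 * x4 K 1
        = -(x4 K 0 * x4 K 1 - x4 K 2 * x4 K 3) from by ring,
      neg_div_neg_eq]
  have f1t : g1 (tQ K) = tQ K := by
    rw [show tQ K = (x4 K 0 - x4 K 1 - x4 K 2 + x4 K 3) / (x4 K 0 * x4 K 3 - x4 K 1 * x4 K 2)
        from rfl,
      map_div₀, map_add, map_sub, map_sub, map_sub, map_mul, map_mul, e10, e11, e12, e13]
    rw [show x4 K 1 - x4 K 0 - x4 K 3 + x4 K 2
        = -(x4 K 0 - x4 K 1 - x4 K 2 + x4 K 3) from by ring,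
      show x4 K 1 * x4 K 2 - x4 K 0 * x4 K 3
        = -(x4 K 0 * x4 K 3 - x4 K 1 * x4 K 2) from by ring,
      neg_div_neg_eq]
  have f2t : g2 (tQ K) = tQ K := by
    rw [show tQ K = (x4 K 0 - x4 K 1 - x4 K 2 + x4 K 3) / (x4 K 0 * x4 K 3 - x4 K 1 * x4 K 2)
        from rfl,
      map_div₀, map_add, map_sub, map_sub, map_sub, map_mul, map_mul, e20, e21, e22, e23]
    rw [show x4 K 2 - x4 K 3 - x4 K 0 + x4 K 1
        = -(x4 K 0 - x4 K 1 - x4 K 2 + x4 K 3) from by ring,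
      show x4 K 2 * x4 K 1 - x4 K 3 * x4 K 0
        = -(x4 K 0 * x4 K 3 - x4 K 1 * x4 K 2) from by ring,
      neg_div_neg_eq]
  have f1u : g1 (uQ K) = uQ K := by
    rw [show uQ K = (x4 K 0 - x4 K 1 + x4 K 2 - x4 K 3) / (x4 K 0 * x4 K 2 - x4 K 1 * x4 K 3)
        from rfl,
      map_div₀, map_sub, map_add, map_sub, map_sub, map_mul, map_mul, e10, e11, e12, e13]
    rw [show x4 K 1 - x4 K 0 + x4 K 3 - x4 K 2
        = -(x4 K 0 - x4 K 1 + x4 K 2 - x4 K 3) from by ring,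
      show x4 K 1 * x4 K 3 - x4 K 0 * x4 K 2
        = -(x4 K 0 * x4 K 2 - x4 K 1 * x4 K 3) from by ring,
      neg_div_neg_eq]
  have f2u : g2 (uQ K) = uQ K := by
    rw [show uQ K = (x4 K 0 - x4 K 1 + x4 K 2 - x4 K 3) / (x4 K 0 * x4 K 2 - x4 K 1 * x4 K 3)
        from rfl,
      map_div₀, map_sub, map_add, map_sub, map_sub, map_mul, map_mul, e20, e21, e22, e23]
    rw [show x4 K 2 - x4 K 3 + x4 K 0 - x4 K 1
        = x4 K 0 - x4 K 1 + x4 K 2 - x4 K 3 from by ring,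
      show x4 K 2 * x4 K 0 - x4 K 3 * x4 K 1
        = x4 K 0 * x4 K 2 - x4 K 1 * x4 K 3 from by ring]
  have hLF : L ≤ fixedField H := by
    rw [hLdef, adjoin_le_iff]
    rintro z (rfl | rfl | rfl | rfl)
    · exact fun g => hfix _ f1s1 f2s1 g g.2
    · exact fun g => hfix _ f1s f2s g g.2
    · exact fun g => hfix _ f1t f2t g g.2
    · exact fun g => hfix _ f1u f2u g g.2
  -- hard direction: [F4 : L] ≤ 4
  have hbound : FiniteDimensional L (F4 K) ∧ finrank L (F4 K) ≤ 4 := hard_bound K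
  haveI := hbound.1
  exact (IntermediateField.eq_of_le_of_finrank_le' hLF
    (by rw [hfr]; exact hbound.2)).symm
end

section
/- With s₁, s₄, S, T, U as above and u₁ = S+T+U, u₂ = ST+TU+SU, u₃ = STU, one has the identity s₄ = (u₁² − 4u₂ + u₃s₁)/u₃² in K(x₁,x₂,x₃,x₄), where s₄ = x₁x₂x₃x₄. -/
open MvPolynomial IntermediateField

lemma aux9 {F : Type*} [Field F] (P Q N D s x : F) (hN : N ≠ 0) (hD : D ≠ 0)
    (h : P ^ 2 - 4 * Q * D + N * s * D = x * N ^ 2) :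
    x = ((P / D) ^ 2 - 4 * (Q / D) + N / D * s) / (N / D) ^ 2 := by
  rw [div_pow, div_pow, eq_comm]
  rw [div_eq_iff (div_ne_zero (pow_ne_zero 2 hN) (pow_ne_zero 2 hD))]
  field_simp
  linear_combination h

set_option maxHeartbeats 2000000 in
/-- s₄ = (u₁² − 4u₂ + u₃s₁)/u₃². -/
theorem stmt_9 (K : Type) [Field K] :
    x4 K 0 * x4 K 1 * x4 K 2 * x4 K 3 =
      (u1Q K ^ 2 - 4 * u2Q K + u3Q K * s1Q K) / u3Q K ^ 2 := by
  have hinj : Function.Injective (algebraMap (MvPolynomial (Fin 4) K) (F4 K)) :=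
    IsFractionRing.injective _ _
  have key : ∀ (p : MvPolynomial (Fin 4) K) (f : Fin 4 → K),
      MvPolynomial.eval f p ≠ 0 →
      algebraMap (MvPolynomial (Fin 4) K) (F4 K) p ≠ 0 := by
    intro p f hf hp
    have : p = 0 := hinj (by simpa using hp)
    rw [this] at hf; simp at hf
  have h1 : x4 K 0 + x4 K 1 - x4 K 2 - x4 K 3 ≠ 0 := by
    have := key (X 0 + X 1 - X 2 - X 3) ![1,0,0,0] (by norm_num [Matrix.cons_val_two, Matrix.cons_val_three])
    simpa [map_add, map_sub] using this
  have h2 : x4 K 0 - x4 K 1 - x4 K 2 + x4 K 3 ≠ 0 := by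
    have := key (X 0 - X 1 - X 2 + X 3) ![1,0,0,0] (by norm_num [Matrix.cons_val_two, Matrix.cons_val_three])
    simpa [map_add, map_sub] using this
  have h3 : x4 K 0 - x4 K 1 + x4 K 2 - x4 K 3 ≠ 0 := by
    have := key (X 0 - X 1 + X 2 - X 3) ![1,0,0,0] (by norm_num [Matrix.cons_val_two, Matrix.cons_val_three])
    simpa [map_add, map_sub] using this
  have h4 : x4 K 0 * x4 K 1 - x4 K 2 * x4 K 3 ≠ 0 := by
    have := key (X 0 * X 1 - X 2 * X 3) ![1,1,0,0] (by norm_num [Matrix.cons_val_two, Matrix.cons_val_three])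
    simpa [map_mul, map_sub] using this
  have h5 : x4 K 0 * x4 K 3 - x4 K 1 * x4 K 2 ≠ 0 := by
    have := key (X 0 * X 3 - X 1 * X 2) ![1,0,0,1] (by norm_num [Matrix.cons_val_two, Matrix.cons_val_three])
    simpa [map_mul, map_sub] using this
  have h6 : x4 K 0 * x4 K 2 - x4 K 1 * x4 K 3 ≠ 0 := by
    have := key (X 0 * X 2 - X 1 * X 3) ![1,0,1,0] (by norm_num [Matrix.cons_val_two, Matrix.cons_val_three])
    simpa [map_mul, map_sub] using this
  have hN : ((x4 K 0 + x4 K 1 - x4 K 2 - x4 K 3) * (x4 K 0 - x4 K 1 - x4 K 2 + x4 K 3) * (x4 K 0 - x4 K 1 + x4 K 2 - x4 K 3)) ≠ 0 := mul_ne_zero (mul_ne_zero h1 h2) h3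
  have hD : ((x4 K 0 * x4 K 1 - x4 K 2 * x4 K 3) * (x4 K 0 * x4 K 3 - x4 K 1 * x4 K 2) * (x4 K 0 * x4 K 2 - x4 K 1 * x4 K 3)) ≠ 0 := mul_ne_zero (mul_ne_zero h4 h5) h6
  have hu1 : u1Q K = ((x4 K 0 + x4 K 1 - x4 K 2 - x4 K 3) * (x4 K 0 * x4 K 3 - x4 K 1 * x4 K 2) * (x4 K 0 * x4 K 2 - x4 K 1 * x4 K 3) + (x4 K 0 - x4 K 1 - x4 K 2 + x4 K 3) * (x4 K 0 * x4 K 1 - x4 K 2 * x4 K 3) * (x4 K 0 * x4 K 2 - x4 K 1 * x4 K 3) + (x4 K 0 - x4 K 1 + x4 K 2 - x4 K 3) * (x4 K 0 * x4 K 1 - x4 K 2 * x4 K 3) * (x4 K 0 * x4 K 3 - x4 K 1 * x4 K 2)) / ((x4 K 0 * x4 K 1 - x4 K 2 * x4 K 3) * (x4 K 0 * x4 K 3 - x4 K 1 * x4 K 2) * (x4 K 0 * x4 K 2 - x4 K 1 * x4 K 3)) := by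
    show (x4 K 0 + x4 K 1 - x4 K 2 - x4 K 3) / (x4 K 0 * x4 K 1 - x4 K 2 * x4 K 3) + (x4 K 0 - x4 K 1 - x4 K 2 + x4 K 3) / (x4 K 0 * x4 K 3 - x4 K 1 * x4 K 2) + (x4 K 0 - x4 K 1 + x4 K 2 - x4 K 3) / (x4 K 0 * x4 K 2 - x4 K 1 * x4 K 3) = _
    field_simp
  have hu2 : u2Q K = ((x4 K 0 + x4 K 1 - x4 K 2 - x4 K 3) * (x4 K 0 - x4 K 1 - x4 K 2 + x4 K 3) * (x4 K 0 * x4 K 2 - x4 K 1 * x4 K 3) + (x4 K 0 - x4 K 1 - x4 K 2 + x4 K 3) * (x4 K 0 - x4 K 1 + x4 K 2 - x4 K 3) * (x4 K 0 * x4 K 1 - x4 K 2 * x4 K 3) + (x4 K 0 + x4 K 1 - x4 K 2 - x4 K 3) * (x4 K 0 - x4 K 1 + x4 K 2 - x4 K 3) * (x4 K 0 * x4 K 3 - x4 K 1 * x4 K 2)) / ((x4 K 0 * x4 K 1 - x4 K 2 * x4 K 3) * (x4 K 0 * x4 K 3 - x4 K 1 * x4 K 2) * (x4 K 0 * x4 K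 2 - x4 K 1 * x4 K 3)) := by
    show (x4 K 0 + x4 K 1 - x4 K 2 - x4 K 3) / (x4 K 0 * x4 K 1 - x4 K 2 * x4 K 3) * ((x4 K 0 - x4 K 1 - x4 K 2 + x4 K 3) / (x4 K 0 * x4 K 3 - x4 K 1 * x4 K 2)) + (x4 K 0 - x4 K 1 - x4 K 2 + x4 K 3) / (x4 K 0 * x4 K 3 - x4 K 1 * x4 K 2) * ((x4 K 0 - x4 K 1 + x4 K 2 - x4 K 3) / (x4 K 0 * x4 K 2 - x4 K 1 * x4 K 3)) + (x4 K 0 + x4 K 1 - x4 K 2 - x4 K 3) / (x4 K 0 * x4 K 1 - x4 K 2 * x4 K 3) * ((x4 K 0 - x4 K 1 + x4 K 2 - x4 K 3) / (x4 K 0 * x4 K 2 - x4 K 1 * x4 K 3)) = _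
    field_simp
  have hu3 : u3Q K = ((x4 K 0 + x4 K 1 - x4 K 2 - x4 K 3) * (x4 K 0 - x4 K 1 - x4 K 2 + x4 K 3) * (x4 K 0 - x4 K 1 + x4 K 2 - x4 K 3)) / ((x4 K 0 * x4 K 1 - x4 K 2 * x4 K 3) * (x4 K 0 * x4 K 3 - x4 K 1 * x4 K 2) * (x4 K 0 * x4 K 2 - x4 K 1 * x4 K 3)) := by
    show (x4 K 0 + x4 K 1 - x4 K 2 - x4 K 3) / (x4 K 0 * x4 K 1 - x4 K 2 * x4 K 3) * ((x4 K 0 - x4 K 1 - x4 K 2 + x4 K 3) / (x4 K 0 * x4 K 3 - x4 K 1 * x4 K 2)) * ((x4 K 0 - x4 K 1 + x4 K 2 - x4 K 3) / (x4 K 0 * x4 K 2 - x4 K 1 * x4 K 3)) = _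
    rw [div_mul_div_comm, div_mul_div_comm]
  rw [hu1, hu2, hu3]
  simp only [s1Q]
  exact aux9 _ _ _ _ _ _ hN hD (by ring)
end
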